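/- arXiv:2603.05814 — 5 statements merged into one kernel-verified Lean document; each statement's English description precedes it below -/
import Mathlib

section
/- (Fletcher–Reeves, strong Wolfe) Let 0 ≤ δ < 1 and assume Assumption A1 holds and Assumption A3 holds (the level set L₀ of x⁰ is bounded). Consider the conjugate gradient iteration with 0 ≤ β_k ≤ δ·β_k^{FR}, where β_k^{FR} := ψ_{x^k}(v(x^k)) / ψ_{x^{k−1}}(v(x^{k−1})) for k ≥ 1. If each d^k satisfies ψ_{x^k}(d^k) < 0 and each t_k satisfies the strong Wolfe conditions at x^k along d^k, then liminf_{k→∞} ‖v(x^k)‖ = 0. -/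
open scoped BigOperators

noncomputable def pd (n : ℕ) (F : EuclideanSpace ℝ (Fin n) → ℝ)
    (x : EuclideanSpace ℝ (Fin n)) (j : Fin n) : ℝ :=
  fderiv ℝ F x (EuclideanSpace.single j (1 : ℝ))

noncomputable def glo (n : ℕ) (F H : EuclideanSpace ℝ (Fin n) → ℝ)
    (x : EuclideanSpace ℝ (Fin n)) (j : Fin n) : ℝ :=
  min (pd n F x j) (pd n H x j)

noncomputable def ghi (n : ℕ) (F H : EuclideanSpace ℝ (Fin n) → ℝ)
    (x : EuclideanSpace ℝ (Fin n)) (j : Fin n) : ℝ :=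
  max (pd n F x j) (pd n H x j)

noncomputable def gloVec (n : ℕ) (F H : EuclideanSpace ℝ (Fin n) → ℝ)
    (x : EuclideanSpace ℝ (Fin n)) : EuclideanSpace ℝ (Fin n) :=
  WithLp.toLp 2 (fun j => glo n F H x j)

noncomputable def ghiVec (n : ℕ) (F H : EuclideanSpace ℝ (Fin n) → ℝ)
    (x : EuclideanSpace ℝ (Fin n)) : EuclideanSpace ℝ (Fin n) :=
  WithLp.toLp 2 (fun j => ghi n F H x j)

noncomputable def psi (m n : ℕ) (Gl Gu : Fin m → EuclideanSpace ℝ (Fin n) → ℝ)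
    (x v : EuclideanSpace ℝ (Fin n)) : ℝ :=
  ⨆ i : Fin m, (1 / 2 : ℝ) *
    ((∑ j : Fin n, (glo n (Gl i) (Gu i) x j + ghi n (Gl i) (Gu i) x j) * v j) +
     (∑ j : Fin n, (ghi n (Gl i) (Gu i) x j - glo n (Gl i) (Gu i) x j) * |v j|))

def LevelSet (m n : ℕ) (Gl Gu : Fin m → EuclideanSpace ℝ (Fin n) → ℝ)
    (x0 : EuclideanSpace ℝ (Fin n)) : Set (EuclideanSpace ℝ (Fin n)) :=
  {x | ∀ i : Fin m, Gl i x ≤ Gl i x0 ∧ Gu i x ≤ Gu i x0}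

def StdWolfe (m n : ℕ) (Gl Gu : Fin m → EuclideanSpace ℝ (Fin n) → ℝ)
    (ρ σ : ℝ) (x d : EuclideanSpace ℝ (Fin n)) (t : ℝ) : Prop :=
  (∀ i : Fin m,
      Gl i (x + t • d) ≤ Gl i x + ρ * t * psi m n Gl Gu x d ∧
      Gu i (x + t • d) ≤ Gu i x + ρ * t * psi m n Gl Gu x d) ∧
  σ * psi m n Gl Gu x d ≤ psi m n Gl Gu (x + t • d) d

def StrongWolfe (m n : ℕ) (Gl Gu : Fin m → EuclideanSpace ℝ (Fin n) → ℝ)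
    (ρ σ : ℝ) (x d : EuclideanSpace ℝ (Fin n)) (t : ℝ) : Prop :=
  (∀ i : Fin m,
      Gl i (x + t • d) ≤ Gl i x + ρ * t * psi m n Gl Gu x d ∧
      Gu i (x + t • d) ≤ Gu i x + ρ * t * psi m n Gl Gu x d) ∧
  |psi m n Gl Gu (x + t • d) d| ≤ σ * |psi m n Gl Gu x d|

def AssumptionA1 (m n : ℕ) (Gl Gu : Fin m → EuclideanSpace ℝ (Fin n) → ℝ)
    (x0 : EuclideanSpace ℝ (Fin n)) : Prop :=
  ∀ i : Fin m, ∃ L : ℝ, 0 < L ∧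
    ∀ y ∈ LevelSet m n Gl Gu x0, ∀ z ∈ LevelSet m n Gl Gu x0,
      ‖gloVec n (Gl i) (Gu i) y - gloVec n (Gl i) (Gu i) z‖ ≤ L * ‖y - z‖ ∧
      ‖ghiVec n (Gl i) (Gu i) y - ghiVec n (Gl i) (Gu i) z‖ ≤ L * ‖y - z‖

def AssumptionA2 (m n : ℕ) (Gl Gu : Fin m → EuclideanSpace ℝ (Fin n) → ℝ)
    (x0 : EuclideanSpace ℝ (Fin n)) : Prop :=
  ∀ y : ℕ → EuclideanSpace ℝ (Fin n),
    (∀ k, y k ∈ LevelSet m n Gl Gu x0) →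
    (∀ (i : Fin m) (k : ℕ), Gl i (y (k+1)) ≤ Gl i (y k) ∧ Gu i (y (k+1)) ≤ Gu i (y k)) →
    ∀ i : Fin m, (∃ Cl : ℝ, ∀ k, Cl ≤ Gl i (y k)) ∧ (∃ Cu : ℝ, ∀ k, Cu ≤ Gu i (y k))

namespace FRaux

noncomputable def absVec (n : ℕ) (v : EuclideanSpace ℝ (Fin n)) : EuclideanSpace ℝ (Fin n) :=
  WithLp.toLp 2 (fun j => |v j|)

lemma absVec_apply (n : ℕ) (v : EuclideanSpace ℝ (Fin n)) (j : Fin n) :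
    absVec n v j = |v j| := rfl

lemma norm_absVec (n : ℕ) (v : EuclideanSpace ℝ (Fin n)) : ‖absVec n v‖ = ‖v‖ := by
  rw [EuclideanSpace.norm_eq, EuclideanSpace.norm_eq]
  simp [absVec_apply, Real.norm_eq_abs, sq_abs]

lemma sum_mul_le (n : ℕ) (c v : EuclideanSpace ℝ (Fin n)) :
    abs (∑ j, c j * v j) ≤ ‖c‖ * ‖v‖ := by
  have h := abs_real_inner_le_norm c v
  rw [real_inner_comm] at h
  simpa [PiLp.inner_apply, RCLike.inner_apply, conj_trivial] using h

lemma sum_mul_abs_le (n : ℕ) (c v : EuclideanSpace ℝ (Fin n)) :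
    abs (∑ j, c j * |v j|) ≤ ‖c‖ * ‖v‖ := by
  have h := abs_real_inner_le_norm c (absVec n v)
  rw [norm_absVec] at h
  rw [real_inner_comm] at h
  simpa [PiLp.inner_apply, RCLike.inner_apply, conj_trivial, absVec_apply] using h

noncomputable def phi (n : ℕ) (F H : EuclideanSpace ℝ (Fin n) → ℝ)
    (x v : EuclideanSpace ℝ (Fin n)) : ℝ :=
  (1 / 2 : ℝ) * ((∑ j, (glo n F H x j + ghi n F H x j) * v j)
      + (∑ j, (ghi n F H x j - glo n F H x j) * |v j|))

lemma psi_eq (m n : ℕ) (Gl Gu : Fin m → EuclideanSpace ℝ (Fin n) → ℝ)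
    (x v : EuclideanSpace ℝ (Fin n)) :
    psi m n Gl Gu x v = ⨆ i, phi n (Gl i) (Gu i) x v := rfl

lemma half_bound (n : ℕ) (a b v : EuclideanSpace ℝ (Fin n)) :
    abs ((1/2 : ℝ) * ((∑ j, (a j + b j) * v j) + (∑ j, (b j - a j) * |v j|)))
      ≤ (‖a‖ + ‖b‖) * ‖v‖ := by
  have ea : ∑ j, (a j + b j) * v j = ∑ j, (a + b) j * v j :=
    Finset.sum_congr rfl fun j _ => by rw [PiLp.add_apply]
  have eb : ∑ j, (b j - a j) * |v j| = ∑ j, (b - a) j * |v j| :=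
    Finset.sum_congr rfl fun j _ => by rw [PiLp.sub_apply]
  have h1 : abs (∑ j, (a j + b j) * v j) ≤ (‖a‖ + ‖b‖) * ‖v‖ := by
    rw [ea]
    refine (sum_mul_le n _ v).trans ?_
    exact mul_le_mul_of_nonneg_right (norm_add_le a b) (norm_nonneg v)
  have h2 : abs (∑ j, (b j - a j) * |v j|) ≤ (‖a‖ + ‖b‖) * ‖v‖ := by
    rw [eb]
    refine (sum_mul_abs_le n _ v).trans ?_
    refine mul_le_mul_of_nonneg_right ?_ (norm_nonneg v)
    exact (norm_sub_le b a).trans (le_of_eq (add_comm _ _))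
  have h3 : abs ((1/2 : ℝ) * ((∑ j, (a j + b j) * v j) + (∑ j, (b j - a j) * |v j|)))
      = (1/2 : ℝ) * abs ((∑ j, (a j + b j) * v j) + (∑ j, (b j - a j) * |v j|)) := by
    rw [abs_mul]; norm_num
  have h4 := abs_add_le (∑ j, (a j + b j) * v j) (∑ j, (b j - a j) * |v j|)
  rw [h3]
  linarith

lemma abs_phi_le (n : ℕ) (F H : EuclideanSpace ℝ (Fin n) → ℝ)
    (x v : EuclideanSpace ℝ (Fin n)) :
    |phi n F H x v| ≤ (‖gloVec n F H x‖ + ‖ghiVec n F H x‖) * ‖v‖ := by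
  have h := half_bound n (gloVec n F H x) (ghiVec n F H x) v
  simpa [phi, gloVec, ghiVec] using h

lemma phi_diff_le (n : ℕ) (F H : EuclideanSpace ℝ (Fin n) → ℝ)
    (x y v : EuclideanSpace ℝ (Fin n)) :
    phi n F H y v ≤ phi n F H x v +
      (‖gloVec n F H y - gloVec n F H x‖ + ‖ghiVec n F H y - ghiVec n F H x‖) * ‖v‖ := by
  have key := half_bound n (gloVec n F H y - gloVec n F H x)
    (ghiVec n F H y - ghiVec n F H x) v
  have key' := le_of_abs_le key
  have e1 : ∑ j, ((gloVec n F H y - gloVec n F H x) j + (ghiVec n F H y - ghiVec n F H x) j) * v j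
      = (∑ j, (glo n F H y j + ghi n F H y j) * v j)
        - ∑ j, (glo n F H x j + ghi n F H x j) * v j := by
    rw [← Finset.sum_sub_distrib]
    refine Finset.sum_congr rfl fun j _ => ?_
    simp [gloVec, ghiVec, PiLp.sub_apply]; ring
  have e2 : ∑ j, ((ghiVec n F H y - ghiVec n F H x) j - (gloVec n F H y - gloVec n F H x) j) * |v j|
      = (∑ j, (ghi n F H y j - glo n F H y j) * |v j|)
        - ∑ j, (ghi n F H x j - glo n F H x j) * |v j| := by
    rw [← Finset.sum_sub_distrib]
    refine Finset.sum_congr rfl fun j _ => ?_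
    simp [gloVec, ghiVec, PiLp.sub_apply]; ring
  rw [e1, e2] at key'
  simp only [phi]
  linarith

lemma phi_zero (n : ℕ) (F H : EuclideanSpace ℝ (Fin n) → ℝ)
    (x : EuclideanSpace ℝ (Fin n)) :
    phi n F H x (0 : EuclideanSpace ℝ (Fin n)) = 0 := by
  have hz : ∀ j, (0 : EuclideanSpace ℝ (Fin n)) j = 0 := fun j => rfl
  simp [phi, hz]

lemma glo_le_ghi (n : ℕ) (F H : EuclideanSpace ℝ (Fin n) → ℝ)
    (x : EuclideanSpace ℝ (Fin n)) (j : Fin n) :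
    glo n F H x j ≤ ghi n F H x j := min_le_max

lemma phi_add_le (n : ℕ) (F H : EuclideanSpace ℝ (Fin n) → ℝ)
    (x u v : EuclideanSpace ℝ (Fin n)) :
    phi n F H x (u + v) ≤ phi n F H x u + phi n F H x v := by
  have hadd : ∀ j, (u + v) j = u j + v j := fun j => rfl
  have e1 : ∑ j, (glo n F H x j + ghi n F H x j) * (u + v) j
      = (∑ j, (glo n F H x j + ghi n F H x j) * u j)
        + ∑ j, (glo n F H x j + ghi n F H x j) * v j := by
    rw [← Finset.sum_add_distrib]
    refine Finset.sum_congr rfl fun j _ => ?_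
    rw [hadd]; ring
  have e2 : ∑ j, (ghi n F H x j - glo n F H x j) * |(u + v) j|
      ≤ (∑ j, (ghi n F H x j - glo n F H x j) * |u j|)
        + ∑ j, (ghi n F H x j - glo n F H x j) * |v j| := by
    rw [← Finset.sum_add_distrib]
    refine Finset.sum_le_sum fun j _ => ?_
    have h1 : |(u + v) j| ≤ |u j| + |v j| := by rw [hadd]; exact abs_add_le _ _
    have h2 : 0 ≤ ghi n F H x j - glo n F H x j :=
      sub_nonneg.mpr (glo_le_ghi n F H x j)
    calc (ghi n F H x j - glo n F H x j) * |(u + v) j|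
        ≤ (ghi n F H x j - glo n F H x j) * (|u j| + |v j|) :=
          mul_le_mul_of_nonneg_left h1 h2
      _ = _ := by ring
  simp only [phi]
  linarith

lemma phi_smul (n : ℕ) (F H : EuclideanSpace ℝ (Fin n) → ℝ)
    (x v : EuclideanSpace ℝ (Fin n)) (c : ℝ) (hc : 0 ≤ c) :
    phi n F H x (c • v) = c * phi n F H x v := by
  have hs : ∀ j, (c • v) j = c * v j := fun j => rfl
  have e1 : ∑ j, (glo n F H x j + ghi n F H x j) * (c • v) j
      = c * ∑ j, (glo n F H x j + ghi n F H x j) * v j := by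
    rw [Finset.mul_sum]
    refine Finset.sum_congr rfl fun j _ => ?_
    rw [hs]; ring
  have e2 : ∑ j, (ghi n F H x j - glo n F H x j) * |(c • v) j|
      = c * ∑ j, (ghi n F H x j - glo n F H x j) * |v j| := by
    rw [Finset.mul_sum]
    refine Finset.sum_congr rfl fun j _ => ?_
    rw [hs, abs_mul, abs_of_nonneg hc]; ring
  simp only [phi, e1, e2]; ring


section PsiLemmas

variable {m n : ℕ} (Gl Gu : Fin m → EuclideanSpace ℝ (Fin n) → ℝ)

lemma psi_le (hm : 0 < m) {x v : EuclideanSpace ℝ (Fin n)} {a : ℝ}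
    (h : ∀ i, phi n (Gl i) (Gu i) x v ≤ a) : psi m n Gl Gu x v ≤ a := by
  haveI : Nonempty (Fin m) := ⟨⟨0, hm⟩⟩
  exact ciSup_le h

lemma le_psi (i : Fin m) (x v : EuclideanSpace ℝ (Fin n)) :
    phi n (Gl i) (Gu i) x v ≤ psi m n Gl Gu x v := by
  rw [psi_eq]
  exact le_ciSup (f := fun i => phi n (Gl i) (Gu i) x v) (Set.finite_range _).bddAbove i

lemma psi_zero (hm : 0 < m) (x : EuclideanSpace ℝ (Fin n)) :
    psi m n Gl Gu x (0 : EuclideanSpace ℝ (Fin n)) = 0 := by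
  haveI : Nonempty (Fin m) := ⟨⟨0, hm⟩⟩
  rw [psi_eq]
  simp only [phi_zero]
  exact ciSup_const

lemma psi_add_le (hm : 0 < m) (x u v : EuclideanSpace ℝ (Fin n)) :
    psi m n Gl Gu x (u + v) ≤ psi m n Gl Gu x u + psi m n Gl Gu x v :=
  psi_le Gl Gu hm fun i => (phi_add_le n (Gl i) (Gu i) x u v).trans
    (add_le_add (le_psi Gl Gu i x u) (le_psi Gl Gu i x v))

lemma psi_smul_le (hm : 0 < m) (x v : EuclideanSpace ℝ (Fin n)) {c : ℝ} (hc : 0 ≤ c) :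
    psi m n Gl Gu x (c • v) ≤ c * psi m n Gl Gu x v :=
  psi_le Gl Gu hm fun i => by
    rw [phi_smul n (Gl i) (Gu i) x v c hc]
    exact mul_le_mul_of_nonneg_left (le_psi Gl Gu i x v) hc

end PsiLemmas

end FRaux

set_option maxHeartbeats 2000000

open FRaux Filter

theorem fr_convergence_strong_wolfe (m n : ℕ) (hm : 0 < m) (hn : 0 < n)
    (Gl Gu : Fin m → EuclideanSpace ℝ (Fin n) → ℝ)
    (hGl : ∀ i, ContDiff ℝ 1 (Gl i)) (hGu : ∀ i, ContDiff ℝ 1 (Gu i))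
    (hle : ∀ (i : Fin m) (x : EuclideanSpace ℝ (Fin n)), Gl i x ≤ Gu i x)
    (vv : EuclideanSpace ℝ (Fin n) → EuclideanSpace ℝ (Fin n))
    (hvmin : ∀ y w : EuclideanSpace ℝ (Fin n),
      psi m n Gl Gu y (vv y) + (1/2) * ‖vv y‖^2 ≤ psi m n Gl Gu y w + (1/2) * ‖w‖^2)
    (ρ σ : ℝ) (hρ : 0 < ρ) (hρσ : ρ < σ) (hσ : σ < 1)
    (x d : ℕ → EuclideanSpace ℝ (Fin n)) (t : ℕ → ℝ) (β : ℕ → ℝ)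
    (hx : ∀ k : ℕ, x (k+1) = x k + t k • d k)
    (ht : ∀ k : ℕ, 0 < t k)
    (hd0 : d 0 = vv (x 0))
    (hdk : ∀ k : ℕ, d (k+1) = vv (x (k+1)) + β (k+1) • d k)
    (hvne : ∀ k : ℕ, vv (x k) ≠ 0)
    (δ : ℝ) (hδ0 : 0 ≤ δ) (hδ1 : δ < 1)
    (hA1 : AssumptionA1 m n Gl Gu (x 0))
    (hA3 : Bornology.IsBounded (LevelSet m n Gl Gu (x 0)))
    (hβ : ∀ k : ℕ, 0 ≤ β (k+1) ∧ β (k+1) ≤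
      δ * (psi m n Gl Gu (x (k+1)) (vv (x (k+1))) / psi m n Gl Gu (x k) (vv (x k))))
    (hdesc : ∀ k : ℕ, psi m n Gl Gu (x k) (d k) < 0)
    (hw : ∀ k : ℕ, StrongWolfe m n Gl Gu ρ σ (x k) (d k) (t k)) :
    Filter.liminf (fun k : ℕ => ‖vv (x k)‖) Filter.atTop = 0 := by
  haveI : Nonempty (Fin m) := ⟨⟨0, hm⟩⟩
  set L0 := LevelSet m n Gl Gu (x 0) with hL0def
  have hσ0 : 0 < σ := lt_trans hρ hρσ
  -- membership of the iterates in the level set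
  have hx0mem : x 0 ∈ L0 := fun i => ⟨le_refl _, le_refl _⟩
  have hmono : ∀ k i, Gl i (x (k+1)) ≤ Gl i (x k) ∧ Gu i (x (k+1)) ≤ Gu i (x k) := by
    intro k i
    have h := (hw k).1 i
    rw [← hx k] at h
    have hneg : ρ * t k * psi m n Gl Gu (x k) (d k) < 0 :=
      mul_neg_of_pos_of_neg (mul_pos hρ (ht k)) (hdesc k)
    exact ⟨by linarith [h.1], by linarith [h.2]⟩
  have hxmem : ∀ k, x k ∈ L0 := by
    intro k
    induction k with
    | zero => exact hx0mem
    | succ k ih =>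
            intro i
            exact ⟨(hmono k i).1.trans (ih i).1, (hmono k i).2.trans (ih i).2⟩
  -- Lipschitz constants
  have hNe : (Finset.univ : Finset (Fin m)).Nonempty := Finset.univ_nonempty
  set Lf : Fin m → ℝ := fun i => (hA1 i).choose with hLfdef
  have hLf : ∀ i, 0 < Lf i ∧ ∀ y ∈ L0, ∀ z ∈ L0,
      ‖gloVec n (Gl i) (Gu i) y - gloVec n (Gl i) (Gu i) z‖ ≤ Lf i * ‖y - z‖ ∧
      ‖ghiVec n (Gl i) (Gu i) y - ghiVec n (Gl i) (Gu i) z‖ ≤ Lf i * ‖y - z‖ :=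
    fun i => (hA1 i).choose_spec
  clear_value Lf
  set L : ℝ := Finset.univ.sup' hNe Lf with hLdef
  have hLi : ∀ i, Lf i ≤ L := fun i => Finset.le_sup' Lf (Finset.mem_univ i)
  have hLpos : 0 < L := lt_of_lt_of_le (hLf ⟨0, hm⟩).1 (hLi ⟨0, hm⟩)
  clear_value L
  -- psi is Lipschitz in the base point on L0
  have hpsiLip : ∀ y ∈ L0, ∀ z ∈ L0, ∀ v : EuclideanSpace ℝ (Fin n),
      psi m n Gl Gu y v ≤ psi m n Gl Gu z v + 2 * L * ‖y - z‖ * ‖v‖ := by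
    intro y hy z hz v
    refine psi_le Gl Gu hm fun i => ?_
    have h := phi_diff_le n (Gl i) (Gu i) z y v
    have hb := (hLf i).2 y hy z hz
    have hbb : (‖gloVec n (Gl i) (Gu i) y - gloVec n (Gl i) (Gu i) z‖ +
        ‖ghiVec n (Gl i) (Gu i) y - ghiVec n (Gl i) (Gu i) z‖) * ‖v‖
        ≤ 2 * L * ‖y - z‖ * ‖v‖ := by
      refine mul_le_mul_of_nonneg_right ?_ (norm_nonneg v)
      have h1 := hb.1
      have h2 := hb.2
      have h3 : Lf i * ‖y - z‖ ≤ L * ‖y - z‖ :=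
        mul_le_mul_of_nonneg_right (hLi i) (norm_nonneg _)
      nlinarith [norm_nonneg (y - z)]
    linarith [le_psi Gl Gu i z v]
  -- radius bound
  obtain ⟨R, hRsub⟩ := (Metric.isBounded_iff_subset_closedBall (x 0)).1 hA3
  have hRy : ∀ y ∈ L0, ‖y - x 0‖ ≤ R := by
    intro y hy
    have := hRsub hy
    rwa [Metric.mem_closedBall, dist_eq_norm] at this
  have hR0 : 0 ≤ R := by
    have := hRy (x 0) hx0mem
    simpa using this
  -- gradient bound M
  set Mf : Fin m → ℝ := fun i => ‖gloVec n (Gl i) (Gu i) (x 0)‖ +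
      ‖ghiVec n (Gl i) (Gu i) (x 0)‖ + 2 * (Lf i * R) with hMfdef
  set M : ℝ := Finset.univ.sup' hNe Mf with hMdef
  have hMb : ∀ (i : Fin m), ∀ y ∈ L0,
      ‖gloVec n (Gl i) (Gu i) y‖ + ‖ghiVec n (Gl i) (Gu i) y‖ ≤ M := by
    intro i y hy
    have hb := (hLf i).2 y hy (x 0) hx0mem
    have h1 : ‖gloVec n (Gl i) (Gu i) y‖ ≤ ‖gloVec n (Gl i) (Gu i) (x 0)‖ + Lf i * ‖y - x 0‖ := by
      have := norm_sub_norm_le (gloVec n (Gl i) (Gu i) y) (gloVec n (Gl i) (Gu i) (x 0))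
      linarith [hb.1]
    have h2 : ‖ghiVec n (Gl i) (Gu i) y‖ ≤ ‖ghiVec n (Gl i) (Gu i) (x 0)‖ + Lf i * ‖y - x 0‖ := by
      have := norm_sub_norm_le (ghiVec n (Gl i) (Gu i) y) (ghiVec n (Gl i) (Gu i) (x 0))
      linarith [hb.2]
    have h3 : Lf i * ‖y - x 0‖ ≤ Lf i * R :=
      mul_le_mul_of_nonneg_left (hRy y hy) (hLf i).1.le
    have h4 : Mf i ≤ M := Finset.le_sup' Mf (Finset.mem_univ i)
    have h5 : Mf i = ‖gloVec n (Gl i) (Gu i) (x 0)‖ + ‖ghiVec n (Gl i) (Gu i) (x 0)‖ +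
        2 * (Lf i * R) := by rw [hMfdef]
    linarith
  clear_value M
  clear_value Mf
  -- lower bound for psi
  have hpsiLB : ∀ y ∈ L0, ∀ v : EuclideanSpace ℝ (Fin n), -(M * ‖v‖) ≤ psi m n Gl Gu y v := by
    intro y hy v
    have h1 := le_psi Gl Gu ⟨0, hm⟩ y v
    have h2 := abs_phi_le n (Gl ⟨0, hm⟩) (Gu ⟨0, hm⟩) y v
    have h3 : (‖gloVec n (Gl ⟨0, hm⟩) (Gu ⟨0, hm⟩) y‖ + ‖ghiVec n (Gl ⟨0, hm⟩) (Gu ⟨0, hm⟩) y‖)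
        * ‖v‖ ≤ M * ‖v‖ :=
      mul_le_mul_of_nonneg_right (hMb ⟨0, hm⟩ y hy) (norm_nonneg v)
    have h4 := neg_abs_le (phi n (Gl ⟨0, hm⟩) (Gu ⟨0, hm⟩) y v)
    linarith
  -- the quantity P
  set P : ℕ → ℝ := fun k => -(psi m n Gl Gu (x k) (vv (x k))) with hPdef
  clear_value P
  have hP1 : ∀ k, (1/2) * ‖vv (x k)‖^2 ≤ P k := by
    intro k
    have h := hvmin (x k) 0
    rw [psi_zero Gl Gu hm (x k)] at h
    simp only [norm_zero] at h
    simp only [hPdef]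
    nlinarith
  have hvpos : ∀ k, 0 < ‖vv (x k)‖ := fun k => norm_pos_iff.2 (hvne k)
  have hPpos : ∀ k, 0 < P k := fun k => lt_of_lt_of_le (by nlinarith [hvpos k]) (hP1 k)
  have hPM : ∀ k, P k ≤ M * ‖vv (x k)‖ := by
    intro k
    have := hpsiLB (x k) (hxmem k) (vv (x k))
    simp only [hPdef]
    linarith
  have hvM : ∀ k, ‖vv (x k)‖ ≤ 2 * M := by
    intro k
    by_contra hgt
    push_neg at hgt
    have h1 := hP1 k
    have h2 := hPM k
    have h3 := hvpos k
    have h4 : 0 < (‖vv (x k)‖ - 2*M) * ‖vv (x k)‖ := mul_pos (by linarith) h3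
    nlinarith
  have hM0 : 0 < M := by nlinarith [hvM 0, hvpos 0]
  have hPM2 : ∀ k, P k ≤ 2 * M^2 := by
    intro k
    have := hPM k
    nlinarith [hvM k, hM0]
  -- summability of s
  set i0 : Fin m := ⟨0, hm⟩ with hi0def
  have hclosed : IsClosed L0 := by
    have : L0 = ⋂ i : Fin m, ({y | Gl i y ≤ Gl i (x 0)} ∩ {y | Gu i y ≤ Gu i (x 0)}) := by
      ext y
      simp only [Set.mem_iInter, Set.mem_inter_iff, Set.mem_setOf_eq]
      constructor
      · exact fun h i => ⟨(h i).1, (h i).2⟩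
      · exact fun h i => ⟨(h i).1, (h i).2⟩
    rw [this]
    exact isClosed_iInter fun i =>
      ((isClosed_le (hGl i).continuous continuous_const).inter
        (isClosed_le (hGu i).continuous continuous_const))
  have hcomp : IsCompact L0 := Metric.isCompact_of_isClosed_isBounded hclosed hA3
  obtain ⟨z0, hz0mem, hz0min⟩ := hcomp.exists_isMinOn ⟨x 0, hx0mem⟩
    ((hGl i0).continuous.continuousOn)
  set C : ℝ := Gl i0 z0 with hCdef
  have hC : ∀ y ∈ L0, C ≤ Gl i0 y := fun y hy => hz0min hy
  set s : ℕ → ℝ := fun k => t k * (-(psi m n Gl Gu (x k) (d k))) with hsdef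
  clear_value s
  have hs0 : ∀ k, 0 ≤ s k := by
    intro k
    simp only [hsdef]
    exact mul_nonneg (ht k).le (by linarith [hdesc k])
  have htel : ∀ N, Gl i0 (x N) + ρ * (∑ k ∈ Finset.range N, s k) ≤ Gl i0 (x 0) := by
    intro N
    induction N with
    | zero => simp
    | succ N ih =>
            have h := ((hw N).1 i0).1
            rw [← hx N] at h
            rw [Finset.sum_range_succ]
            have he : ρ * t N * psi m n Gl Gu (x N) (d N) = -(ρ * s N) := by
              simp only [hsdef]; ring
            have h2 : Gl i0 (x (N+1)) ≤ Gl i0 (x N) - ρ * s N := by linarith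
            have h3 : ρ * (∑ k ∈ Finset.range N, s k + s N) =
                ρ * (∑ k ∈ Finset.range N, s k) + ρ * s N := by ring
            linarith
  have hsum : Summable s := by
    have hρsum : Summable (fun k => ρ * s k) := by
      apply summable_of_sum_range_le (c := Gl i0 (x 0) - C)
        (fun k => mul_nonneg hρ.le (hs0 k))
      intro N
      have h1 := htel N
      have h2 := hC (x N) (hxmem N)
      rw [← Finset.mul_sum]
      linarith
    have := hρsum.mul_left ρ⁻¹
    have he : (fun k => ρ⁻¹ * (ρ * s k)) = s := by
      funext k
      field_simp
    rwa [he] at this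
  have hstend : Tendsto s atTop (nhds 0) := hsum.tendsto_atTop_zero
  -- the quantity p and Zoutendijk-type inequality
  set p : ℕ → ℝ := fun k => -(psi m n Gl Gu (x k) (d k)) with hpdef
  clear_value p
  have hp0 : ∀ k, 0 < p k := fun k => by simp only [hpdef]; linarith [hdesc k]
  have hkey : ∀ k, (1 - σ) * p k ≤ 2 * L * t k * ‖d k‖^2 := by
    intro k
    have hw2 := (hw k).2
    rw [← hx k] at hw2
    have habs : |psi m n Gl Gu (x k) (d k)| = p k := by
      simp only [hpdef]
      rw [abs_of_neg (hdesc k)]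
    rw [habs] at hw2
    have hlow : -(σ * p k) ≤ psi m n Gl Gu (x (k+1)) (d k) := (abs_le.1 hw2).1
    have hlip := hpsiLip (x (k+1)) (hxmem (k+1)) (x k) (hxmem k) (d k)
    have hxx : ‖x (k+1) - x k‖ = t k * ‖d k‖ := by
      rw [hx k, add_sub_cancel_left, norm_smul, Real.norm_eq_abs, abs_of_pos (ht k)]
    rw [hxx] at hlip
    have hsq : ‖d k‖^2 = ‖d k‖ * ‖d k‖ := sq (‖d k‖) ▸ rfl
    simp only [hpdef] at *
    nlinarith
  -- main contradiction argument
  by_contra hne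
  have hbdd : IsBoundedUnder (· ≤ ·) atTop (fun k : ℕ => ‖vv (x k)‖) :=
    isBoundedUnder_of ⟨2 * M, hvM⟩
  have hcob : IsCoboundedUnder (· ≥ ·) atTop (fun k : ℕ => ‖vv (x k)‖) :=
    hbdd.isCoboundedUnder_ge
  set γ : ℝ := liminf (fun k : ℕ => ‖vv (x k)‖) atTop with hγdef
  have hγ0 : 0 ≤ γ := by
    rw [hγdef]
    exact le_liminf_of_le hcob (Filter.Eventually.of_forall fun k => norm_nonneg _)
  have hγpos : 0 < γ := lt_of_le_of_ne hγ0 (Ne.symm hne)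
  have hγlt : γ / 2 < liminf (fun k : ℕ => ‖vv (x k)‖) atTop := by
    rw [← hγdef]; linarith
  have hblo : IsBoundedUnder (· ≥ ·) atTop (fun k : ℕ => ‖vv (x k)‖) :=
    isBoundedUnder_of ⟨0, fun k => norm_nonneg _⟩
  have hev := eventually_lt_of_lt_liminf hγlt hblo
  clear_value γ
  obtain ⟨K, hK⟩ := eventually_atTop.1 hev
  -- lower bound for P on the tail
  set μ : ℝ := (γ/2)^2/2 with hμdef
  clear_value μ
  have hμpos : 0 < μ := by
    rw [hμdef]
    exact div_pos (pow_pos (by linarith) 2) two_pos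
  have hPmu : ∀ k, K ≤ k → μ ≤ P k := by
    intro k hk
    have h1 := hK k hk
    have h2 := hP1 k
    have h3 : μ ≤ 1/2 * ‖vv (x k)‖^2 := by
      rw [hμdef]
      nlinarith [mul_pos (show (0:ℝ) < ‖vv (x k)‖ - γ/2 by linarith)
        (show (0:ℝ) < ‖vv (x k)‖ + γ/2 by linarith [hvpos k])]
    linarith
  -- beta ratio bounds
  have hβub : ∀ k, β (k+1) ≤ δ * (P (k+1) / P k) := by
    intro k
    have h := (hβ k).2
    have e1 : psi m n Gl Gu (x (k+1)) (vv (x (k+1))) = -(P (k+1)) := by simp [hPdef]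
    have e2 : psi m n Gl Gu (x k) (vv (x k)) = -(P k) := by simp [hPdef]
    rw [e1, e2, neg_div_neg_eq] at h
    exact h
  -- bound on the directions
  set R0 : ℝ := max (‖d K‖ / P K) (4 / (γ * (1 - δ))) with hR0def
  clear_value R0
  have hR0pos : 0 < R0 := by
    rw [hR0def]
    exact lt_of_lt_of_le (div_pos four_pos (mul_pos hγpos (by linarith))) (le_max_right _ _)
  have hR0r : 4 / (γ * (1 - δ)) ≤ R0 := by rw [hR0def]; exact le_max_right _ _
  have hR0l : ‖d K‖ / P K ≤ R0 := by rw [hR0def]; exact le_max_left _ _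
  have hdbd : ∀ k, K ≤ k → ‖d k‖ ≤ R0 * P k := by
    intro k hk
    induction k, hk using Nat.le_induction with
    | base =>
      have h1 : ‖d K‖ = (‖d K‖ / P K) * P K := (div_mul_cancel₀ ‖d K‖ (hPpos K).ne').symm
      rw [h1]
      exact mul_le_mul_of_nonneg_right hR0l (hPpos K).le
    | succ k hk ih =>
      rw [hdk k]
      have h1 : ‖vv (x (k+1)) + β (k+1) • d k‖ ≤ ‖vv (x (k+1))‖ + β (k+1) * ‖d k‖ := by
        refine (norm_add_le _ _).trans ?_
        rw [norm_smul, Real.norm_eq_abs, abs_of_nonneg (hβ k).1]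
      have h2 : β (k+1) * ‖d k‖ ≤ (δ * (P (k+1) / P k)) * (R0 * P k) :=
        mul_le_mul (hβub k) ih (norm_nonneg _)
          (mul_nonneg hδ0 (div_nonneg (hPpos _).le (hPpos _).le))
      have h3 : (δ * (P (k+1) / P k)) * (R0 * P k) = δ * R0 * P (k+1) := by
        field_simp [(hPpos k).ne']
      have h4 : ‖vv (x (k+1))‖ ≤ (1 - δ) * R0 * P (k+1) := by
        have hv := hK (k+1) (by omega)
        have hp := hP1 (k+1)
        have hγne : γ ≠ 0 := ne_of_gt hγpos
        have hδne : (1:ℝ) - δ ≠ 0 := ne_of_gt (by linarith)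
        have h5 : 4 / γ ≤ (1 - δ) * R0 := by
          have e : (1 - δ) * (4 / (γ * (1 - δ))) = 4 / γ := by
            field_simp
          calc 4 / γ = (1 - δ) * (4 / (γ * (1 - δ))) := e.symm
            _ ≤ (1 - δ) * R0 := mul_le_mul_of_nonneg_left hR0r (by linarith)
        have h6 : (γ/4) * ‖vv (x (k+1))‖ ≤ P (k+1) := by
          nlinarith [mul_nonneg (norm_nonneg (vv (x (k+1))))
            (show (0:ℝ) ≤ ‖vv (x (k+1))‖ - γ/2 by linarith)]
        have hA := mul_le_mul_of_nonneg_right h5 (hPpos (k+1)).le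
        have hB := mul_le_mul_of_nonneg_left h6 (show (0:ℝ) ≤ 4/γ by positivity)
        have hE : (4/γ) * ((γ/4) * ‖vv (x (k+1))‖) = ‖vv (x (k+1))‖ := by
          field_simp
        calc ‖vv (x (k+1))‖ = (4/γ) * ((γ/4) * ‖vv (x (k+1))‖) := hE.symm
          _ ≤ (4/γ) * P (k+1) := hB
          _ ≤ (1 - δ) * R0 * P (k+1) := hA
      calc ‖vv (x (k+1)) + β (k+1) • d k‖ ≤ ‖vv (x (k+1))‖ + β (k+1) * ‖d k‖ := h1
        _ ≤ (1 - δ) * R0 * P (k+1) + (δ * (P (k+1) / P k)) * (R0 * P k) := add_le_add h4 h2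
        _ = (1 - δ) * R0 * P (k+1) + δ * R0 * P (k+1) := by rw [h3]
        _ = R0 * P (k+1) := by ring
  set D : ℝ := R0 * (2 * M^2) with hDdef
  clear_value D
  have hDpos : 0 < D := by
    rw [hDdef]
    exact mul_pos hR0pos (mul_pos two_pos (pow_pos hM0 2))
  have hdD : ∀ k, K ≤ k → ‖d k‖ ≤ D := by
    intro k hk
    refine (hdbd k hk).trans ?_
    rw [hDdef, mul_comm R0 (2 * M^2), mul_comm R0 (P k)]
    exact mul_le_mul_of_nonneg_right (hPM2 k) hR0pos.le
  set C2 : ℝ := 2 * L * D^2 / (1 - σ) with hC2def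
  clear_value C2
  have h1σ : 0 < 1 - σ := by linarith
  have hC2pos : 0 < C2 := by
    rw [hC2def]
    exact div_pos (mul_pos (mul_pos two_pos hLpos) (pow_pos hDpos 2)) h1σ
  have hpsq : ∀ k, K ≤ k → p k^2 ≤ C2 * s k := by
    intro k hk
    have h := hkey k
    have hdk2 : ‖d k‖^2 ≤ D^2 := pow_le_pow_left₀ (norm_nonneg _) (hdD k hk) 2
    have h2 : 2 * L * t k * ‖d k‖^2 ≤ 2 * L * t k * D^2 :=
      mul_le_mul_of_nonneg_left hdk2
        (mul_nonneg (mul_nonneg two_pos.le hLpos.le) (ht k).le)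
    have h3 : (1 - σ) * p k ≤ 2 * L * t k * D^2 := le_trans h h2
    have h4 : (1 - σ) * p k * p k ≤ (2 * L * t k * D^2) * p k :=
      mul_le_mul_of_nonneg_right h3 (hp0 k).le
    have hsk : s k = t k * p k := by simp [hsdef, hpdef]
    rw [hC2def, div_mul_eq_mul_div, le_div_iff₀ h1σ]
    calc p k^2 * (1 - σ) = (1 - σ) * p k * p k := by ring
      _ ≤ (2 * L * t k * D^2) * p k := h4
      _ = 2 * L * D^2 * (t k * p k) := by ring
      _ = 2 * L * D^2 * s k := by rw [hsk]
  -- bound on beta along the tail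
  set B : ℝ := δ * (2 * M^2) / μ with hBdef
  clear_value B
  have hBnn : 0 ≤ B := by
    rw [hBdef]
    exact div_nonneg (mul_nonneg hδ0 (mul_pos two_pos (pow_pos hM0 2)).le) hμpos.le
  have hβB : ∀ k, K ≤ k → β (k+1) ≤ B := by
    intro k hk
    refine (hβub k).trans ?_
    rw [hBdef]
    have h1 : P (k+1) / P k ≤ (2 * M^2) / μ :=
      div_le_div₀ (mul_pos two_pos (pow_pos hM0 2)).le (hPM2 (k+1)) hμpos (hPmu k hk)
    calc δ * (P (k+1) / P k) ≤ δ * ((2 * M^2) / μ) := mul_le_mul_of_nonneg_left h1 hδ0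
      _ = δ * (2 * M^2) / μ := by ring
  -- recurrence for p on the tail
  have hrec : ∀ k, K ≤ k → μ - σ * B * p k ≤ p (k+1) := by
    intro k hk
    have hsplit : psi m n Gl Gu (x (k+1)) (d (k+1)) ≤
        psi m n Gl Gu (x (k+1)) (vv (x (k+1))) + β (k+1) * psi m n Gl Gu (x (k+1)) (d k) := by
      rw [hdk k]
      refine (psi_add_le Gl Gu hm _ _ _).trans ?_
      exact add_le_add_right (psi_smul_le Gl Gu hm _ _ (hβ k).1) _
    have hw2 := (hw k).2
    rw [← hx k] at hw2
    have habs : |psi m n Gl Gu (x k) (d k)| = p k := by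
      simp only [hpdef]
      rw [abs_of_neg (hdesc k)]
    rw [habs] at hw2
    have h1 : psi m n Gl Gu (x (k+1)) (d k) ≤ σ * p k := le_trans (le_abs_self _) hw2
    have h2 : psi m n Gl Gu (x (k+1)) (vv (x (k+1))) = -(P (k+1)) := by simp [hPdef]
    have h3 : β (k+1) * psi m n Gl Gu (x (k+1)) (d k) ≤ B * (σ * p k) := by
      have hσp : 0 ≤ σ * p k := mul_nonneg hσ0.le (hp0 k).le
      calc β (k+1) * psi m n Gl Gu (x (k+1)) (d k) ≤ β (k+1) * (σ * p k) :=
            mul_le_mul_of_nonneg_left h1 (hβ k).1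
        _ ≤ B * (σ * p k) := mul_le_mul_of_nonneg_right (hβB k hk) hσp
    have h4 := hPmu (k+1) (by omega)
    have h5 : psi m n Gl Gu (x (k+1)) (d (k+1)) = -(p (k+1)) := by simp [hpdef]
    rw [h2, h5] at hsplit
    linarith
  -- conclusion
  set ε : ℝ := μ / (2 * (1 + σ * B)) with hεdef
  clear_value ε
  have hσB : 0 ≤ σ * B := mul_nonneg hσ0.le hBnn
  have hden : (0:ℝ) < 2 * (1 + σ * B) := by linarith
  have hεpos : 0 < ε := by
    rw [hεdef]
    exact div_pos hμpos hden
  have hεeq : μ = 2 * ε + 2 * (σ * B) * ε := by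
    rw [hεdef]
    field_simp
  have hev2 : ∀ᶠ k in atTop, s k < ε^2 / C2 :=
    hstend.eventually_lt_const (div_pos (pow_pos hεpos 2) hC2pos)
  obtain ⟨N, hN⟩ := eventually_atTop.1 hev2
  set k0 : ℕ := max N K with hk0def
  have hKk0 : K ≤ k0 := le_max_right N K
  have hNk0 : N ≤ k0 := le_max_left N K
  have hpk : ∀ k, k0 ≤ k → p k < ε := by
    intro k hk
    have h1 := hpsq k (le_trans hKk0 hk)
    have h2 := hN k (le_trans hNk0 hk)
    have he : C2 * (ε^2 / C2) = ε^2 := by field_simp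
    have h3 : C2 * s k < ε^2 := by
      calc C2 * s k < C2 * (ε^2 / C2) := mul_lt_mul_of_pos_left h2 hC2pos
        _ = ε^2 := he
    nlinarith [hp0 k, hεpos]
  have hA' := hpk k0 (le_refl _)
  have hB' := hpk (k0+1) (by omega)
  have hR' := hrec k0 hKk0
  have h5 : σ * B * p k0 ≤ σ * B * ε := mul_le_mul_of_nonneg_left hA'.le hσB
  have h6 : 0 ≤ σ * B * ε := mul_nonneg hσB hεpos.le
  linarith
end

section
/- (Conjugate Descent sufficient descent) Consider the conjugate gradient iteration in which each t_k satisfies the strong Wolfe conditions at x^k along d^k, and suppose that for every k ≥ 1: β_k ≥ 0 and β_k·ψ_{x^{k−1}}(d^{k−1}) ≥ ψ_{x^k}(v(x^k)) (i.e., β_k is at most the Conjugate Descent parameter β_k^{CD} := ψ_{x^k}(v(x^k)) / ψ_{x^{k−1}}(d^{k−1}), whose denominator is negative). Then for all k ≥ 0, ψ_{x^k}(d^k) ≤ (1−σ)·ψ_{x^k}(v(x^k)) < 0; i.e., the sufficient descent condition holds with c = 1−σ. -/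
open scoped BigOperators

noncomputable def psiT (m n : ℕ) (Gl Gu : Fin m → EuclideanSpace ℝ (Fin n) → ℝ)
    (x v : EuclideanSpace ℝ (Fin n)) (i : Fin m) : ℝ :=
  (1 / 2 : ℝ) *
    ((∑ j : Fin n, (glo n (Gl i) (Gu i) x j + ghi n (Gl i) (Gu i) x j) * v j) +
     (∑ j : Fin n, (ghi n (Gl i) (Gu i) x j - glo n (Gl i) (Gu i) x j) * |v j|))

lemma psi_eq_csSup (m n : ℕ) (Gl Gu : Fin m → EuclideanSpace ℝ (Fin n) → ℝ)
    (x v : EuclideanSpace ℝ (Fin n)) :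
    psi m n Gl Gu x v = ⨆ i, psiT m n Gl Gu x v i := rfl

lemma psi_zero (m n : ℕ) (hm : 0 < m) (Gl Gu : Fin m → EuclideanSpace ℝ (Fin n) → ℝ)
    (x : EuclideanSpace ℝ (Fin n)) : psi m n Gl Gu x 0 = 0 := by
  haveI : Nonempty (Fin m) := ⟨⟨0, hm⟩⟩
  have h : ∀ i : Fin m, psiT m n Gl Gu x 0 i = 0 := by
    intro i
    simp [psiT]
  rw [psi_eq_csSup]
  simp only [h, ciSup_const]

lemma psi_add_smul_le (m n : ℕ) (hm : 0 < m)
    (Gl Gu : Fin m → EuclideanSpace ℝ (Fin n) → ℝ)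
    (x a c : EuclideanSpace ℝ (Fin n)) {β : ℝ} (hβ : 0 ≤ β) :
    psi m n Gl Gu x (a + β • c) ≤ psi m n Gl Gu x a + β * psi m n Gl Gu x c := by
  haveI : Nonempty (Fin m) := ⟨⟨0, hm⟩⟩
  rw [psi_eq_csSup]
  apply ciSup_le
  intro i
  have hterm : psiT m n Gl Gu x (a + β • c) i ≤
      psiT m n Gl Gu x a i + β * psiT m n Gl Gu x c i := by
    unfold psiT
    have happ : ∀ j : Fin n, (a + β • c) j = a j + β * c j := fun j => rfl
    have habs : ∀ j : Fin n,
        (ghi n (Gl i) (Gu i) x j - glo n (Gl i) (Gu i) x j) * |(a + β • c) j| ≤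
        (ghi n (Gl i) (Gu i) x j - glo n (Gl i) (Gu i) x j) * (|a j| + β * |c j|) := by
      intro j
      apply mul_le_mul_of_nonneg_left
      · rw [happ]
        calc |a j + β * c j| ≤ |a j| + |β * c j| := abs_add_le _ _
          _ = |a j| + β * |c j| := by rw [abs_mul, abs_of_nonneg hβ]
      · simp [ghi, glo, min_le_max]
    have h1 : ∑ j : Fin n,
        (ghi n (Gl i) (Gu i) x j - glo n (Gl i) (Gu i) x j) * |(a + β • c) j| ≤
        ∑ j : Fin n,
        (ghi n (Gl i) (Gu i) x j - glo n (Gl i) (Gu i) x j) * (|a j| + β * |c j|) :=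
      Finset.sum_le_sum fun j _ => habs j
    have h2 : ∑ j : Fin n,
        (glo n (Gl i) (Gu i) x j + ghi n (Gl i) (Gu i) x j) * (a + β • c) j =
        (∑ j : Fin n, (glo n (Gl i) (Gu i) x j + ghi n (Gl i) (Gu i) x j) * a j) +
        β * ∑ j : Fin n, (glo n (Gl i) (Gu i) x j + ghi n (Gl i) (Gu i) x j) * c j := by
      rw [Finset.mul_sum, ← Finset.sum_add_distrib]
      refine Finset.sum_congr rfl fun j _ => ?_
      rw [happ]; ring
    have h3 : ∑ j : Fin n,
        (ghi n (Gl i) (Gu i) x j - glo n (Gl i) (Gu i) x j) * (|a j| + β * |c j|) =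
        (∑ j : Fin n, (ghi n (Gl i) (Gu i) x j - glo n (Gl i) (Gu i) x j) * |a j|) +
        β * ∑ j : Fin n, (ghi n (Gl i) (Gu i) x j - glo n (Gl i) (Gu i) x j) * |c j| := by
      rw [Finset.mul_sum, ← Finset.sum_add_distrib]
      refine Finset.sum_congr rfl fun j _ => ?_
      ring
    rw [h3] at h1
    nlinarith [h1, h2]
  have hb1 : psiT m n Gl Gu x a i ≤ psi m n Gl Gu x a :=
    le_ciSup (Finite.bddAbove_range _) i
  have hb2 : psiT m n Gl Gu x c i ≤ psi m n Gl Gu x c :=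
    le_ciSup (Finite.bddAbove_range _) i
  have := mul_le_mul_of_nonneg_left hb2 hβ
  linarith

theorem cd_sufficient_descent (m n : ℕ) (hm : 0 < m) (hn : 0 < n)
    (Gl Gu : Fin m → EuclideanSpace ℝ (Fin n) → ℝ)
    (hGl : ∀ i, ContDiff ℝ 1 (Gl i)) (hGu : ∀ i, ContDiff ℝ 1 (Gu i))
    (hle : ∀ (i : Fin m) (x : EuclideanSpace ℝ (Fin n)), Gl i x ≤ Gu i x)
    (vv : EuclideanSpace ℝ (Fin n) → EuclideanSpace ℝ (Fin n))
    (hvmin : ∀ y w : EuclideanSpace ℝ (Fin n),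
      psi m n Gl Gu y (vv y) + (1/2) * ‖vv y‖^2 ≤ psi m n Gl Gu y w + (1/2) * ‖w‖^2)
    (ρ σ : ℝ) (hρ : 0 < ρ) (hρσ : ρ < σ) (hσ : σ < 1)
    (x d : ℕ → EuclideanSpace ℝ (Fin n)) (t : ℕ → ℝ) (β : ℕ → ℝ)
    (hx : ∀ k : ℕ, x (k+1) = x k + t k • d k)
    (ht : ∀ k : ℕ, 0 < t k)
    (hd0 : d 0 = vv (x 0))
    (hdk : ∀ k : ℕ, d (k+1) = vv (x (k+1)) + β (k+1) • d k)
    (hvne : ∀ k : ℕ, vv (x k) ≠ 0)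
    (hw : ∀ k : ℕ, StrongWolfe m n Gl Gu ρ σ (x k) (d k) (t k))
    (hβ : ∀ k : ℕ, 0 ≤ β (k+1) ∧
      psi m n Gl Gu (x (k+1)) (vv (x (k+1))) ≤ β (k+1) * psi m n Gl Gu (x k) (d k)) :
    ∀ k : ℕ, psi m n Gl Gu (x k) (d k) ≤ (1 - σ) * psi m n Gl Gu (x k) (vv (x k)) ∧
      (1 - σ) * psi m n Gl Gu (x k) (vv (x k)) < 0 := by
  have hσ0 : 0 < σ := lt_trans hρ hρσ
  -- ψ_{x k}(v(x k)) < 0 for all k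
  have hvneg : ∀ k : ℕ, psi m n Gl Gu (x k) (vv (x k)) < 0 := by
    intro k
    have h0 := hvmin (x k) 0
    rw [psi_zero m n hm Gl Gu (x k)] at h0
    have hnorm : (0 : ℝ) < ‖vv (x k)‖ ^ 2 := by
      have : ‖vv (x k)‖ ≠ 0 := norm_ne_zero_iff.mpr (hvne k)
      positivity
    simp only [norm_zero] at h0
    nlinarith
  intro k
  induction k with
  | zero =>
    have hv0 := hvneg 0
    constructor
    · rw [hd0]; nlinarith
    · rw [hd0] at *; nlinarith
  | succ k ih =>
    obtain ⟨ihd, _⟩ := ih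
    have hdneg : psi m n Gl Gu (x k) (d k) < 0 := lt_of_le_of_lt ihd (by nlinarith [hvneg k])
    obtain ⟨hβ0, hβle⟩ := hβ k
    -- strong Wolfe at step k: |ψ_{x^{k+1}}(d^k)| ≤ σ |ψ_{x^k}(d^k)|
    have hw2 := (hw k).2
    rw [← hx k] at hw2
    have habs : psi m n Gl Gu (x (k+1)) (d k) ≤ -(σ * psi m n Gl Gu (x k) (d k)) := by
      have h1 : psi m n Gl Gu (x (k+1)) (d k) ≤ |psi m n Gl Gu (x (k+1)) (d k)| :=
        le_abs_self _
      have h2 : |psi m n Gl Gu (x k) (d k)| = -(psi m n Gl Gu (x k) (d k)) :=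
        abs_of_neg hdneg
      rw [h2] at hw2
      linarith
    have hsub := psi_add_smul_le m n hm Gl Gu (x (k+1)) (vv (x (k+1))) (d k) hβ0
    rw [← hdk k] at hsub
    have hβd : β (k+1) * psi m n Gl Gu (x (k+1)) (d k) ≤
        -(σ * (β (k+1) * psi m n Gl Gu (x k) (d k))) := by
      have := mul_le_mul_of_nonneg_left habs hβ0
      nlinarith
    have hfin : psi m n Gl Gu (x (k+1)) (d (k+1)) ≤
        (1 - σ) * psi m n Gl Gu (x (k+1)) (vv (x (k+1))) := by
      nlinarith [hvneg (k+1)]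
    exact ⟨hfin, by nlinarith [hvneg (k+1)]⟩
end

section
/- (Conjugate Descent global convergence) Assume Assumptions A1 and A2 hold for x⁰, and let 0 ≤ η < 1−σ. Consider the conjugate gradient iteration with β_k := η·β_k^{CD}, where β_k^{CD} := ψ_{x^k}(v(x^k)) / ψ_{x^{k−1}}(d^{k−1}) for k ≥ 1. If each t_k satisfies the strong Wolfe conditions at x^k along d^k, then liminf_{k→∞} ‖v(x^k)‖ = 0. -/
open scoped BigOperators

-- auxiliary
noncomputable def phiS (n : ℕ) (a b v : EuclideanSpace ℝ (Fin n)) : ℝ :=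
  ∑ j, max (a j * v j) (b j * v j)

lemma half_formula (a b v : ℝ) (hab : a ≤ b) :
    (1/2 : ℝ) * ((a + b) * v + (b - a) * |v|) = max (a * v) (b * v) := by
  rcases le_or_gt 0 v with hv | hv
  · rw [abs_of_nonneg hv, max_eq_right (mul_le_mul_of_nonneg_right hab hv)]; ring
  · rw [abs_of_neg hv, max_eq_left (by nlinarith)]; ring

lemma psi_eq (m n : ℕ) (Gl Gu : Fin m → EuclideanSpace ℝ (Fin n) → ℝ)
    (x v : EuclideanSpace ℝ (Fin n)) :
    psi m n Gl Gu x v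
      = ⨆ i, phiS n (gloVec n (Gl i) (Gu i) x) (ghiVec n (Gl i) (Gu i) x) v := by
  unfold psi phiS
  refine iSup_congr fun i => ?_
  rw [← Finset.sum_add_distrib, Finset.mul_sum]
  exact Finset.sum_congr rfl fun j _ =>
    half_formula (glo n (Gl i) (Gu i) x j) (ghi n (Gl i) (Gu i) x j) (v j) (min_le_max)

lemma phiS_zero (n : ℕ) (a b : EuclideanSpace ℝ (Fin n)) : phiS n a b 0 = 0 := by
  unfold phiS
  refine Finset.sum_eq_zero fun j _ => ?_
  have : (0 : EuclideanSpace ℝ (Fin n)) j = 0 := rfl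
  simp [this]

lemma phiS_smul (n : ℕ) (a b v : EuclideanSpace ℝ (Fin n)) (c : ℝ) (hc : 0 ≤ c) :
    phiS n a b (c • v) = c * phiS n a b v := by
  unfold phiS
  rw [Finset.mul_sum]
  refine Finset.sum_congr rfl fun j _ => ?_
  have h : (c • v) j = c * v j := rfl
  rw [h, show a j * (c * v j) = c * (a j * v j) by ring,
    show b j * (c * v j) = c * (b j * v j) by ring]
  exact (mul_max_of_nonneg _ _ hc).symm

lemma phiS_add_le (n : ℕ) (a b u w : EuclideanSpace ℝ (Fin n)) :
    phiS n a b (u + w) ≤ phiS n a b u + phiS n a b w := by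
  unfold phiS
  rw [← Finset.sum_add_distrib]
  refine Finset.sum_le_sum fun j _ => ?_
  have h : (u + w) j = u j + w j := rfl
  rw [h]
  refine max_le ?_ ?_
  · rw [mul_add]; exact add_le_add (le_max_left _ _) (le_max_left _ _)
  · rw [mul_add]; exact add_le_add (le_max_right _ _) (le_max_right _ _)

lemma cs_abs (n : ℕ) (p q : EuclideanSpace ℝ (Fin n)) :
    ∑ j, |p j| * |q j| ≤ ‖p‖ * ‖q‖ := by
  have h := Real.sum_mul_le_sqrt_mul_sqrt Finset.univ (fun j => |p j|) (fun j => |q j|)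
  have hp : ‖p‖ = Real.sqrt (∑ j, |p j| ^ 2) := by
    rw [EuclideanSpace.norm_eq]; congr 1
  have hq : ‖q‖ = Real.sqrt (∑ j, |q j| ^ 2) := by
    rw [EuclideanSpace.norm_eq]; congr 1
  rw [hp, hq]; exact h

lemma phiS_lip (n : ℕ) (a b a' b' v : EuclideanSpace ℝ (Fin n)) :
    phiS n a b v ≤ phiS n a' b' v + (‖a - a'‖ + ‖b - b'‖) * ‖v‖ := by
  have key : phiS n a b v ≤ phiS n a' b' v
      + (∑ j, |(a - a') j| * |v j| + ∑ j, |(b - b') j| * |v j|) := by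
    unfold phiS
    rw [← Finset.sum_add_distrib, ← Finset.sum_add_distrib]
    refine Finset.sum_le_sum fun j _ => ?_
    have ha : (a - a') j = a j - a' j := rfl
    have hb : (b - b') j = b j - b' j := rfl
    rw [ha, hb]
    refine max_le ?_ ?_
    · have h1 : a j * v j ≤ a' j * v j + |a j - a' j| * |v j| := by
        have : (a j - a' j) * v j ≤ |a j - a' j| * |v j| :=
          le_trans (le_abs_self _) (by rw [abs_mul])
        nlinarith [this]
      refine le_trans h1 ?_
      have h2 : a' j * v j ≤ max (a' j * v j) (b' j * v j) := le_max_left _ _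
      nlinarith [abs_nonneg (b j - b' j), abs_nonneg (v j),
        mul_nonneg (abs_nonneg (b j - b' j)) (abs_nonneg (v j))]
    · have h1 : b j * v j ≤ b' j * v j + |b j - b' j| * |v j| := by
        have : (b j - b' j) * v j ≤ |b j - b' j| * |v j| :=
          le_trans (le_abs_self _) (by rw [abs_mul])
        nlinarith [this]
      refine le_trans h1 ?_
      have h2 : b' j * v j ≤ max (a' j * v j) (b' j * v j) := le_max_right _ _
      nlinarith [mul_nonneg (abs_nonneg (a j - a' j)) (abs_nonneg (v j))]
  refine le_trans key ?_
  have c1 := cs_abs n (a - a') v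
  have c2 := cs_abs n (b - b') v
  nlinarith [c1, c2]

lemma div_nn (a b : ℝ) (ha : a ≤ 0) (hb : b ≤ 0) : 0 ≤ a / b :=
  div_nonneg_iff.mpr (Or.inr ⟨ha, hb⟩)

lemma psi_smul (m n : ℕ) (Gl Gu : Fin m → EuclideanSpace ℝ (Fin n) → ℝ)
    (x v : EuclideanSpace ℝ (Fin n)) (c : ℝ) (hc : 0 ≤ c) :
    psi m n Gl Gu x (c • v) = c * psi m n Gl Gu x v := by
  rw [psi_eq, psi_eq]
  simp only [phiS_smul n _ _ _ c hc]
  exact (Real.mul_iSup_of_nonneg hc _).symm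

lemma psi_add_le (m n : ℕ) (hm : 0 < m) (Gl Gu : Fin m → EuclideanSpace ℝ (Fin n) → ℝ)
    (x u w : EuclideanSpace ℝ (Fin n)) :
    psi m n Gl Gu x (u + w) ≤ psi m n Gl Gu x u + psi m n Gl Gu x w := by
  haveI : Nonempty (Fin m) := ⟨⟨0, hm⟩⟩
  rw [psi_eq, psi_eq, psi_eq]
  refine ciSup_le fun i => le_trans (phiS_add_le n _ _ u w) ?_
  exact add_le_add
    (le_ciSup (f := fun i => phiS n (gloVec n (Gl i) (Gu i) x) (ghiVec n (Gl i) (Gu i) x) u)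
      (Set.Finite.bddAbove (Set.finite_range _)) i)
    (le_ciSup (f := fun i => phiS n (gloVec n (Gl i) (Gu i) x) (ghiVec n (Gl i) (Gu i) x) w)
      (Set.Finite.bddAbove (Set.finite_range _)) i)

lemma psi_lip (m n : ℕ) (hm : 0 < m) (Gl Gu : Fin m → EuclideanSpace ℝ (Fin n) → ℝ)
    (x y v : EuclideanSpace ℝ (Fin n)) (C : ℝ)
    (h : ∀ i, ‖gloVec n (Gl i) (Gu i) y - gloVec n (Gl i) (Gu i) x‖
      + ‖ghiVec n (Gl i) (Gu i) y - ghiVec n (Gl i) (Gu i) x‖ ≤ C) :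
    psi m n Gl Gu y v ≤ psi m n Gl Gu x v + C * ‖v‖ := by
  haveI : Nonempty (Fin m) := ⟨⟨0, hm⟩⟩
  rw [psi_eq, psi_eq]
  refine ciSup_le fun i => le_trans
    (phiS_lip n (gloVec n (Gl i) (Gu i) y) (ghiVec n (Gl i) (Gu i) y)
      (gloVec n (Gl i) (Gu i) x) (ghiVec n (Gl i) (Gu i) x) v) ?_
  exact add_le_add
    (le_ciSup (f := fun i => phiS n (gloVec n (Gl i) (Gu i) x) (ghiVec n (Gl i) (Gu i) x) v)
      (Set.Finite.bddAbove (Set.finite_range _)) i)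
    (mul_le_mul_of_nonneg_right (h i) (norm_nonneg v))

set_option maxHeartbeats 3000000 in
theorem cd_convergence (m n : ℕ) (hm : 0 < m) (hn : 0 < n)
    (Gl Gu : Fin m → EuclideanSpace ℝ (Fin n) → ℝ)
    (hGl : ∀ i, ContDiff ℝ 1 (Gl i)) (hGu : ∀ i, ContDiff ℝ 1 (Gu i))
    (hle : ∀ (i : Fin m) (x : EuclideanSpace ℝ (Fin n)), Gl i x ≤ Gu i x)
    (vv : EuclideanSpace ℝ (Fin n) → EuclideanSpace ℝ (Fin n))
    (hvmin : ∀ y w : EuclideanSpace ℝ (Fin n),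
      psi m n Gl Gu y (vv y) + (1/2) * ‖vv y‖^2 ≤ psi m n Gl Gu y w + (1/2) * ‖w‖^2)
    (ρ σ : ℝ) (hρ : 0 < ρ) (hρσ : ρ < σ) (hσ : σ < 1)
    (x d : ℕ → EuclideanSpace ℝ (Fin n)) (t : ℕ → ℝ) (β : ℕ → ℝ)
    (hx : ∀ k : ℕ, x (k+1) = x k + t k • d k)
    (ht : ∀ k : ℕ, 0 < t k)
    (hd0 : d 0 = vv (x 0))
    (hdk : ∀ k : ℕ, d (k+1) = vv (x (k+1)) + β (k+1) • d k)
    (hvne : ∀ k : ℕ, vv (x k) ≠ 0)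
    (η : ℝ) (hη0 : 0 ≤ η) (hη1 : η < 1 - σ)
    (hA1 : AssumptionA1 m n Gl Gu (x 0))
    (hA2 : AssumptionA2 m n Gl Gu (x 0))
    (hβ : ∀ k : ℕ, β (k+1) =
      η * (psi m n Gl Gu (x (k+1)) (vv (x (k+1))) / psi m n Gl Gu (x k) (d k)))
    (hw : ∀ k : ℕ, StrongWolfe m n Gl Gu ρ σ (x k) (d k) (t k)) :
    Filter.liminf (fun k : ℕ => ‖vv (x k)‖) Filter.atTop = 0 := by
  haveI : Nonempty (Fin m) := ⟨⟨0, hm⟩⟩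
  set Th : ℕ → ℝ := fun k => psi m n Gl Gu (x k) (vv (x k)) with hTh
  set Ps : ℕ → ℝ := fun k => psi m n Gl Gu (x k) (d k) with hPs
  clear_value Th Ps
  have hThe : ∀ k, psi m n Gl Gu (x k) (vv (x k)) = Th k := fun k => by rw [hTh]
  have hPse : ∀ k, psi m n Gl Gu (x k) (d k) = Ps k := fun k => by rw [hPs]
  have hσ0 : 0 < σ := lt_trans hρ hρσ
  -- Θ bounds
  have hThle : ∀ k, Th k ≤ -(1/2) * ‖vv (x k)‖^2 := by
    intro k
    have h := hvmin (x k) 0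
    rw [psi_zero m n hm] at h
    simp only [norm_zero] at h
    simp only [hTh]
    nlinarith [h]
  have hThneg : ∀ k, Th k < 0 := by
    intro k
    have hv : 0 < ‖vv (x k)‖ := norm_pos_iff.mpr (hvne k)
    nlinarith [hThle k]
  set c1 : ℝ := 1 - η * σ with hc1
  have hc1pos : 0 < c1 := by simp only [hc1]; nlinarith
  have hc1le : c1 ≤ 1 := by simp only [hc1]; nlinarith
  clear_value c1
  -- descent property
  have hdesc : ∀ k, Ps k ≤ c1 * Th k := by
    intro k
    induction k with
    | zero =>
      have h0 : Ps 0 = Th 0 := by simp only [hPs, hTh, hd0]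
      rw [h0]
      nlinarith [hThneg 0]
    | succ k ih =>
      have hPsneg : Ps k < 0 := lt_of_le_of_lt ih (mul_neg_of_pos_of_neg hc1pos (hThneg k))
      have hPsne : Ps k ≠ 0 := ne_of_lt hPsneg
      have hβ0 : 0 ≤ β (k+1) := by
        rw [hβ k, hThe (k+1), hPse k]
        exact mul_nonneg hη0
          (div_nn _ _ (le_of_lt (hThneg (k+1))) (le_of_lt hPsneg))
      have hsub : Ps (k+1) ≤ Th (k+1) + β (k+1) * psi m n Gl Gu (x (k+1)) (d k) := by
        have h1 : Ps (k+1) = psi m n Gl Gu (x (k+1)) (vv (x (k+1)) + β (k+1) • d k) := by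
          simp only [hPs, hdk k]
        rw [h1]
        refine le_trans (psi_add_le m n hm Gl Gu _ _ _) ?_
        rw [psi_smul m n Gl Gu _ _ _ hβ0, hThe (k+1)]
      have hW2 : |psi m n Gl Gu (x (k+1)) (d k)| ≤ σ * |Ps k| := by
        have h2 := (hw k).2
        rw [← hx k, hPse k] at h2
        exact h2
      have hcurv : psi m n Gl Gu (x (k+1)) (d k) ≤ σ * (-Ps k) := by
        have h3 := le_trans (le_abs_self _) hW2
        rwa [abs_of_neg hPsneg] at h3
      have hbb : β (k+1) * psi m n Gl Gu (x (k+1)) (d k) ≤ β (k+1) * (σ * (-Ps k)) :=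
        mul_le_mul_of_nonneg_left hcurv hβ0
      have heq : β (k+1) * (σ * (-Ps k)) = -(η * σ) * Th (k+1) := by
        rw [hβ k]
        simp only [hTh, hPs] at *
        field_simp
      have : Ps (k+1) ≤ Th (k+1) + -(η * σ) * Th (k+1) := by linarith
      calc Ps (k+1) ≤ Th (k+1) + -(η * σ) * Th (k+1) := this
      _ = c1 * Th (k+1) := by rw [hc1]; ring
  have hPsneg : ∀ k, Ps k < 0 := fun k =>
    lt_of_le_of_lt (hdesc k) (mul_neg_of_pos_of_neg hc1pos (hThneg k))
  -- monotone decrease of objectives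
  have hmono : ∀ k (i : Fin m), Gl i (x (k+1)) ≤ Gl i (x k) ∧ Gu i (x (k+1)) ≤ Gu i (x k) := by
    intro k i
    have h1 := (hw k).1 i
    rw [← hx k] at h1
    have hneg : ρ * t k * Ps k < 0 :=
      mul_neg_of_pos_of_neg (mul_pos hρ (ht k)) (hPsneg k)
    have e : psi m n Gl Gu (x k) (d k) = Ps k := by simp only [hPs]
    rw [e] at h1
    exact ⟨by linarith [h1.1], by linarith [h1.2]⟩
  have hL0 : ∀ k, x k ∈ LevelSet m n Gl Gu (x 0) := by
    intro k
    induction k with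
    | zero => intro i; exact ⟨le_refl _, le_refl _⟩
    | succ k ih =>
      intro i
      exact ⟨le_trans (hmono k i).1 (ih i).1, le_trans (hmono k i).2 (ih i).2⟩
  -- uniform Lipschitz constant
  choose Lf hLfpos hLf using hA1
  set L : ℝ := Finset.univ.sup' Finset.univ_nonempty Lf with hLdef
  have hLge : ∀ i, Lf i ≤ L := fun i => Finset.le_sup' Lf (Finset.mem_univ i)
  have hLpos : 0 < L := lt_of_lt_of_le (hLfpos ⟨0, hm⟩) (hLge _)
  clear_value L
  have hnormstep : ∀ k, ‖x (k+1) - x k‖ = t k * ‖d k‖ := by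
    intro k
    rw [hx k, add_sub_cancel_left, norm_smul, Real.norm_eq_abs, abs_of_pos (ht k)]
  have hpsiLip : ∀ k (v : EuclideanSpace ℝ (Fin n)),
      psi m n Gl Gu (x (k+1)) v ≤ psi m n Gl Gu (x k) v + (2*L*(t k * ‖d k‖)) * ‖v‖ := by
    intro k v
    refine psi_lip m n hm Gl Gu (x k) (x (k+1)) v _ (fun i => ?_)
    have h1 := (hLf i (x (k+1)) (hL0 (k+1)) (x k) (hL0 k)).1
    have h2 := (hLf i (x (k+1)) (hL0 (k+1)) (x k) (hL0 k)).2
    rw [hnormstep k] at h1 h2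
    have htd : 0 ≤ t k * ‖d k‖ := mul_nonneg (le_of_lt (ht k)) (norm_nonneg _)
    nlinarith [mul_le_mul_of_nonneg_right (hLge i) htd]
  -- Zoutendijk-type step bound
  have hZout : ∀ k, (1-σ)*(-Ps k) ≤ 2*L*(t k * ‖d k‖) * ‖d k‖ := by
    intro k
    have h2 := (hw k).2
    rw [← hx k] at h2
    have hcurv : σ * Ps k ≤ psi m n Gl Gu (x (k+1)) (d k) := by
      have h3 := (abs_le.mp h2).1
      have e : psi m n Gl Gu (x k) (d k) = Ps k := by simp only [hPs]
      rw [e, abs_of_neg (hPsneg k)] at h3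
      linarith
    have hlip := hpsiLip k (d k)
    have e : psi m n Gl Gu (x k) (d k) = Ps k := by simp only [hPs]
    rw [e] at hlip
    nlinarith [hcurv, hlip]
  have hdne : ∀ k, d k ≠ 0 := by
    intro k hk
    have : Ps k = 0 := by simp only [hPs]; rw [hk, psi_zero m n hm]
    exact absurd this (ne_of_lt (hPsneg k))
  have hdpos : ∀ k, 0 < ‖d k‖ := fun k => norm_pos_iff.mpr (hdne k)
  -- summability
  obtain ⟨Cl, hCl⟩ := (hA2 x hL0 (fun i k => hmono k i) ⟨0, hm⟩).1
  set C : ℝ := (Gl ⟨0, hm⟩ (x 0) - Cl) / ρ with hCdef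
  clear_value C
  have hsum1 : ∀ N, ∑ k ∈ Finset.range N, t k * (-Ps k) ≤ C := by
    intro N
    have hstep : ∀ k, ρ * (t k * (-Ps k)) ≤ Gl ⟨0, hm⟩ (x k) - Gl ⟨0, hm⟩ (x (k+1)) := by
      intro k
      have h1 := ((hw k).1 ⟨0, hm⟩).1
      rw [← hx k] at h1
      have e : psi m n Gl Gu (x k) (d k) = Ps k := by simp only [hPs]
      rw [e] at h1
      nlinarith [h1]
    have htel : ∑ k ∈ Finset.range N, (Gl ⟨0, hm⟩ (x k) - Gl ⟨0, hm⟩ (x (k+1)))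
        = Gl ⟨0, hm⟩ (x 0) - Gl ⟨0, hm⟩ (x N) :=
      Finset.sum_range_sub' (fun k => Gl ⟨0, hm⟩ (x k)) N
    have hsums := Finset.sum_le_sum (fun k (_ : k ∈ Finset.range N) => hstep k)
    rw [htel, ← Finset.mul_sum] at hsums
    have hN := hCl N
    rw [hCdef, le_div_iff₀ hρ]
    nlinarith [hsums, hN]
  set Z : ℝ := 2*L*C/(1-σ) with hZdef
  clear_value Z
  have h1σ : 0 < 1 - σ := by linarith
  have hsum2 : ∀ N, ∑ k ∈ Finset.range N, Ps k^2 / ‖d k‖^2 ≤ Z := by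
    intro N
    have hterm : ∀ k, Ps k^2/‖d k‖^2 ≤ (2*L/(1-σ)) * (t k * (-Ps k)) := by
      intro k
      have hB : (0:ℝ) < ‖d k‖^2 := pow_pos (hdpos k) 2
      have h := mul_le_mul_of_nonneg_left (hZout k) (le_of_lt (neg_pos.mpr (hPsneg k)))
      have key : Ps k^2 * (1-σ) ≤ 2*L*(t k*(-Ps k)) * ‖d k‖^2 := by nlinarith [h]
      have h2 : Ps k^2 ≤ (2*L/(1-σ))*(t k*(-Ps k)) * ‖d k‖^2 := by
        have e : (2*L/(1-σ))*(t k*(-Ps k)) * ‖d k‖^2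
            = (2*L*(t k*(-Ps k)) * ‖d k‖^2)/(1-σ) := by ring
        rw [e, le_div_iff₀ h1σ]
        nlinarith [key]
      calc Ps k^2/‖d k‖^2 ≤ ((2*L/(1-σ))*(t k*(-Ps k)) * ‖d k‖^2)/‖d k‖^2 :=
            (div_le_div_iff_of_pos_right hB).mpr h2
        _ = (2*L/(1-σ))*(t k*(-Ps k)) := mul_div_cancel_right₀ _ (ne_of_gt hB)
    calc ∑ k ∈ Finset.range N, Ps k^2/‖d k‖^2
        ≤ ∑ k ∈ Finset.range N, (2*L/(1-σ)) * (t k * (-Ps k)) :=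
          Finset.sum_le_sum (fun k _ => hterm k)
      _ = (2*L/(1-σ)) * ∑ k ∈ Finset.range N, t k * (-Ps k) := by rw [Finset.mul_sum]
      _ ≤ (2*L/(1-σ)) * C := by
          refine mul_le_mul_of_nonneg_left (hsum1 N) ?_
          positivity
      _ = Z := by rw [hZdef]; ring
  -- key: no positive eventual lower bound on ‖vv (x k)‖
  have hkey : ∀ ε : ℝ, 0 < ε → ∀ K : ℕ, ¬ (∀ k, K ≤ k → ε ≤ ‖vv (x k)‖) := by
    intro ε hε K hK
    have hThb : ∀ k, K ≤ k → ε^2/2 ≤ -Th k := by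
      intro k hk
      have h1 := hThle k
      have h2 := hK k hk
      nlinarith [norm_nonneg (vv (x k))]
    set r : ℝ := η / c1 with hrdef
    have hr0 : 0 ≤ r := div_nonneg hη0 (le_of_lt hc1pos)
    have hr1 : r < 1 := by
      rw [hrdef, div_lt_one hc1pos, hc1]
      nlinarith
    clear_value r
    set B : ℝ := max (‖d K‖ / (-Th K)) (2/(ε*(1-r))) with hBdef
    have hr1' : (0:ℝ) < 1 - r := by linarith
    have hBpos : 0 < B :=
      lt_of_lt_of_le (div_pos two_pos (mul_pos hε hr1')) (le_max_right _ _)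
    have hB2 : 2/ε + r*B ≤ B := by
      have h2 : 2/(ε*(1-r)) ≤ B := le_max_right _ _
      have h3 : 2 ≤ B*(ε*(1-r)) := (div_le_iff₀ (mul_pos hε hr1')).mp h2
      have h4 : 2/ε ≤ (1-r)*B := by
        rw [div_le_iff₀ hε]; nlinarith
      nlinarith
    have hβnn : ∀ k, 0 ≤ β (k+1) := by
      intro k
      rw [hβ k, hThe (k+1), hPse k]
      exact mul_nonneg hη0 (div_nn _ _ (le_of_lt (hThneg (k+1))) (le_of_lt (hPsneg k)))
    have hDb : ∀ j : ℕ, ‖d (K+j)‖ ≤ B * (-Th (K+j)) := by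
      intro j
      induction j with
      | zero =>
        have hThKpos : 0 < -Th K := by linarith [hThneg K]
        have h1 : ‖d K‖ / (-Th K) ≤ B := le_max_left _ _
        have : ‖d K‖ ≤ B * (-Th K) := by
          rw [← div_mul_cancel₀ (‖d K‖) (ne_of_gt hThKpos)]
          exact mul_le_mul_of_nonneg_right h1 (le_of_lt hThKpos)
        simpa using this
      | succ j ih =>
        have hkk : K + (j+1) = (K+j) + 1 := rfl
        rw [hkk]
        set k := K + j with hkdef
        have hThkpos : 0 < -Th k := by linarith [hThneg k]
        have hThk1pos : 0 < -Th (k+1) := by linarith [hThneg (k+1)]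
        have hnorm : ‖d (k+1)‖ ≤ ‖vv (x (k+1))‖ + β (k+1) * ‖d k‖ := by
          rw [hdk k]
          refine le_trans (norm_add_le _ _) ?_
          rw [norm_smul, Real.norm_eq_abs, abs_of_nonneg (hβnn k)]
        have hv1 : ‖vv (x (k+1))‖ ≤ (2/ε) * (-Th (k+1)) := by
          have h1 := hThle (k+1)
          have h2 := hK (k+1) (by omega)
          have h3 : 0 < ‖vv (x (k+1))‖ := norm_pos_iff.mpr (hvne (k+1))
          rw [div_mul_eq_mul_div, le_div_iff₀ hε]
          nlinarith
        have hβb : β (k+1) * ‖d k‖ ≤ r * (B * (-Th (k+1))) := by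
          have hPsk : c1 * (-Th k) ≤ -Ps k := by nlinarith [hdesc k]
          have hc1Th : 0 < c1 * (-Th k) := mul_pos hc1pos hThkpos
          have hβle : β (k+1) ≤ η * (-Th (k+1)) / (c1 * (-Th k)) := by
            rw [hβ k]
            have e1 : psi m n Gl Gu (x (k+1)) (vv (x (k+1))) = Th (k+1) := by simp only [hTh]
            have e2 : psi m n Gl Gu (x k) (d k) = Ps k := by simp only [hPs]
            rw [e1, e2, show Th (k+1) / Ps k = (-Th (k+1)) / (-Ps k) by rw [neg_div_neg_eq],
              mul_div_assoc']
            exact div_le_div_of_nonneg_left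
              (by nlinarith [hThk1pos] : 0 ≤ η * -Th (k+1)) hc1Th hPsk
          calc β (k+1) * ‖d k‖
              ≤ (η * (-Th (k+1)) / (c1 * (-Th k))) * (B * (-Th k)) := by
                refine mul_le_mul hβle ih (norm_nonneg _) ?_
                positivity
            _ = r * (B * (-Th (k+1))) := by
                have hc1ne : c1 ≠ 0 := ne_of_gt hc1pos
                have hThkne : Th k ≠ 0 := ne_of_lt (hThneg k)
                rw [hrdef]
                field_simp
        calc ‖d (k+1)‖ ≤ ‖vv (x (k+1))‖ + β (k+1) * ‖d k‖ := hnorm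
          _ ≤ (2/ε) * (-Th (k+1)) + r * (B * (-Th (k+1))) := add_le_add hv1 hβb
          _ ≤ B * (-Th (k+1)) := by nlinarith [hB2, hThk1pos]
    set δ : ℝ := (c1/B)^2 with hδdef
    have hδ : 0 < δ := by rw [hδdef]; exact pow_pos (div_pos hc1pos hBpos) 2
    have hlb : ∀ k, K ≤ k → δ ≤ Ps k^2/‖d k‖^2 := by
      intro k hk
      obtain ⟨j, rfl⟩ := Nat.exists_eq_add_of_le hk
      have hd := hDb j
      have hThp : 0 < -Th (K+j) := by linarith [hThneg (K+j)]
      have hPsb : c1 * (-Th (K+j)) ≤ -Ps (K+j) := by nlinarith [hdesc (K+j)]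
      rw [hδdef, le_div_iff₀ (pow_pos (hdpos (K+j)) 2), div_pow,
        div_mul_eq_mul_div, div_le_iff₀ (pow_pos hBpos 2)]
      have h1 : ‖d (K+j)‖^2 ≤ B^2 * (Th (K+j))^2 := by
        nlinarith [hd, norm_nonneg (d (K+j))]
      have h2 : c1^2 * (Th (K+j))^2 ≤ Ps (K+j)^2 := by
        have hsq := mul_self_le_mul_self (le_of_lt (mul_pos hc1pos hThp)) hPsb
        nlinarith [hsq]
      nlinarith [mul_le_mul_of_nonneg_left h1 (sq_nonneg c1),
        mul_le_mul_of_nonneg_left h2 (sq_nonneg B)]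
    obtain ⟨M, hM⟩ := exists_nat_gt (Z/δ)
    have hNsum := hsum2 (K+M)
    have hsubset : Finset.Ico K (K+M) ⊆ Finset.range (K+M) := by
      intro a ha
      simp only [Finset.mem_Ico] at ha
      simp only [Finset.mem_range]
      omega
    have hup : ∑ k ∈ Finset.Ico K (K+M), Ps k^2/‖d k‖^2
        ≤ ∑ k ∈ Finset.range (K+M), Ps k^2/‖d k‖^2 :=
      Finset.sum_le_sum_of_subset_of_nonneg hsubset (fun k _ _ => by positivity)
    have hlow : (M:ℝ) * δ ≤ ∑ k ∈ Finset.Ico K (K+M), Ps k^2/‖d k‖^2 := by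
      have hcard : (Finset.Ico K (K+M)).card = M := by rw [Nat.card_Ico]; omega
      have := Finset.card_nsmul_le_sum (Finset.Ico K (K+M)) (fun k => Ps k^2/‖d k‖^2) δ
        (fun k hk => hlb k (Finset.mem_Ico.mp hk).1)
      rwa [hcard, nsmul_eq_mul] at this
    have hZlt : Z < (M:ℝ) * δ := by
      rw [div_lt_iff₀ hδ] at hM
      linarith
    linarith
  -- conclude
  rw [Filter.liminf_eq]
  have h0S : (0:ℝ) ∈ {a : ℝ | ∀ᶠ k in Filter.atTop, a ≤ ‖vv (x k)‖} :=
    Filter.Eventually.of_forall fun k => norm_nonneg _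
  have hub : ∀ a ∈ {a : ℝ | ∀ᶠ k in Filter.atTop, a ≤ ‖vv (x k)‖}, a ≤ 0 := by
    intro a ha
    by_contra hpos
    push_neg at hpos
    obtain ⟨K, hK⟩ := Filter.eventually_atTop.mp ha
    exact hkey a hpos K hK
  exact le_antisymm (csSup_le ⟨0, h0S⟩ hub) (le_csSup ⟨0, fun a ha => hub a ha⟩ h0S)
end

section
/- (Modified Dai–Yuan global convergence) Assume Assumptions A1 and A2 hold for x⁰, and let ζ > 1. Consider the conjugate gradient iteration with β_k := β_k^{mDY}, where β_k^{mDY} := −ψ_{x^k}(v(x^k)) / (ψ_{x^k}(d^{k−1}) − ζ·ψ_{x^{k−1}}(d^{k−1})) for k ≥ 1. If each t_k satisfies the strong Wolfe conditions at x^k along d^k, then liminf_{k→∞} ‖v(x^k)‖ = 0. -/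
open scoped BigOperators

namespace MDY

lemma sum_mul_le_norm {n : ℕ} (a b : EuclideanSpace ℝ (Fin n)) :
    ∑ j, a j * b j ≤ ‖a‖ * ‖b‖ := by
  have h := real_inner_le_norm a b
  simpa [PiLp.inner_apply, RCLike.inner_apply, mul_comm] using h

lemma sum_mul_abs_le_norm {n : ℕ} (a b : EuclideanSpace ℝ (Fin n)) :
    ∑ j, a j * |b j| ≤ ‖a‖ * ‖b‖ := by
  have h1 : ∑ j, a j * |b j| ≤ ∑ j, |a j| * |b j| := by
    apply Finset.sum_le_sum
    intro j _
    exact mul_le_mul_of_nonneg_right (le_abs_self _) (abs_nonneg _)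
  have h2 : (∑ j, |a j| * |b j|) ^ 2 ≤ (∑ j, |a j| ^ 2) * (∑ j, |b j| ^ 2) :=
    Finset.sum_mul_sq_le_sq_mul_sq _ _ _
  have h3 : ∑ j, |a j| * |b j| ≤ Real.sqrt ((∑ j, |a j| ^ 2) * (∑ j, |b j| ^ 2)) := by
    have := Real.sqrt_le_sqrt h2
    rwa [Real.sqrt_sq (by positivity)] at this
  calc ∑ j, a j * |b j| ≤ ∑ j, |a j| * |b j| := h1
    _ ≤ Real.sqrt ((∑ j, |a j| ^ 2) * (∑ j, |b j| ^ 2)) := h3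
    _ = ‖a‖ * ‖b‖ := by
        rw [Real.sqrt_mul (by positivity), EuclideanSpace.norm_eq, EuclideanSpace.norm_eq]
        simp [sq_abs]

/-- the inner function of psi -/
noncomputable def phi (m n : ℕ) (Gl Gu : Fin m → EuclideanSpace ℝ (Fin n) → ℝ)
    (x v : EuclideanSpace ℝ (Fin n)) (i : Fin m) : ℝ :=
  (1 / 2 : ℝ) *
    ((∑ j : Fin n, (glo n (Gl i) (Gu i) x j + ghi n (Gl i) (Gu i) x j) * v j) +
     (∑ j : Fin n, (ghi n (Gl i) (Gu i) x j - glo n (Gl i) (Gu i) x j) * |v j|))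

lemma psi_eq (m n : ℕ) (Gl Gu : Fin m → EuclideanSpace ℝ (Fin n) → ℝ)
    (x v : EuclideanSpace ℝ (Fin n)) :
    psi m n Gl Gu x v = ⨆ i, phi m n Gl Gu x v i := rfl

variable {m n : ℕ} {Gl Gu : Fin m → EuclideanSpace ℝ (Fin n) → ℝ}
  {x y v w : EuclideanSpace ℝ (Fin n)}

lemma phi_bdd (x v : EuclideanSpace ℝ (Fin n)) :
    BddAbove (Set.range (phi m n Gl Gu x v)) :=
  Set.Finite.bddAbove (Set.finite_range _)

lemma le_psi (hm : 0 < m) (i : Fin m) : phi m n Gl Gu x v i ≤ psi m n Gl Gu x v :=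
  le_ciSup (phi_bdd x v) i

lemma psi_le (hm : 0 < m) {c : ℝ} (h : ∀ i, phi m n Gl Gu x v i ≤ c) :
    psi m n Gl Gu x v ≤ c := by
  have : Nonempty (Fin m) := ⟨⟨0, hm⟩⟩
  exact ciSup_le h

lemma phi_zero (i : Fin m) : phi m n Gl Gu x 0 i = 0 := by
  have h0 : ∀ j : Fin n, (0 : EuclideanSpace ℝ (Fin n)) j = 0 := fun j => rfl
  simp [phi, h0]

lemma psi_zero (hm : 0 < m) : psi m n Gl Gu x 0 = 0 := by
  have : Nonempty (Fin m) := ⟨⟨0, hm⟩⟩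
  rw [psi_eq]
  simp [phi_zero]

lemma ghi_sub_glo_nonneg (i : Fin m) (j : Fin n) :
    0 ≤ ghi n (Gl i) (Gu i) x j - glo n (Gl i) (Gu i) x j :=
  sub_nonneg.2 (min_le_max)

lemma phi_add_smul (i : Fin m) {c : ℝ} (hc : 0 ≤ c) :
    phi m n Gl Gu x (v + c • w) i ≤ phi m n Gl Gu x v i + c * phi m n Gl Gu x w i := by
  set g : Fin n → ℝ := fun j => glo n (Gl i) (Gu i) x j + ghi n (Gl i) (Gu i) x j with hg
  set h : Fin n → ℝ := fun j => ghi n (Gl i) (Gu i) x j - glo n (Gl i) (Gu i) x j with hh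
  have hadd : ∀ j : Fin n, (v + c • w) j = v j + c * w j := fun j => rfl
  have hphi : ∀ u : EuclideanSpace ℝ (Fin n),
      phi m n Gl Gu x u i = (1/2 : ℝ) * ((∑ j, g j * u j) + ∑ j, h j * |u j|) := fun u => rfl
  rw [hphi, hphi, hphi]
  have hA : ∑ j, g j * (v + c • w) j = (∑ j, g j * v j) + c * ∑ j, g j * w j := by
    rw [Finset.mul_sum, ← Finset.sum_add_distrib]
    refine Finset.sum_congr rfl (fun j _ => ?_)
    rw [hadd]; ring
  have hB : ∑ j, h j * |(v + c • w) j| ≤ (∑ j, h j * |v j|) + c * ∑ j, h j * |w j| := by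
    rw [Finset.mul_sum, ← Finset.sum_add_distrib]
    refine Finset.sum_le_sum (fun j _ => ?_)
    rw [hadd]
    have h1 : |v j + c * w j| ≤ |v j| + c * |w j| := by
      calc |v j + c * w j| ≤ |v j| + |c * w j| := abs_add_le _ _
        _ = |v j| + c * |w j| := by rw [abs_mul, abs_of_nonneg hc]
    have h2 : (0:ℝ) ≤ h j := sub_nonneg.2 min_le_max
    nlinarith
  rw [hA]
  linarith

lemma psi_add_smul (hm : 0 < m) {c : ℝ} (hc : 0 ≤ c) :
    psi m n Gl Gu x (v + c • w) ≤ psi m n Gl Gu x v + c * psi m n Gl Gu x w := by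
  refine psi_le hm (fun i => ?_)
  calc phi m n Gl Gu x (v + c • w) i ≤ phi m n Gl Gu x v i + c * phi m n Gl Gu x w i :=
        phi_add_smul i hc
    _ ≤ psi m n Gl Gu x v + c * psi m n Gl Gu x w :=
        add_le_add (le_psi hm i) (mul_le_mul_of_nonneg_left (le_psi hm i) hc)

lemma phi_shift (i : Fin m) (x y v : EuclideanSpace ℝ (Fin n)) :
    phi m n Gl Gu y v i ≤ phi m n Gl Gu x v i +
      (‖gloVec n (Gl i) (Gu i) y - gloVec n (Gl i) (Gu i) x‖ +
       ‖ghiVec n (Gl i) (Gu i) y - ghiVec n (Gl i) (Gu i) x‖) * ‖v‖ := by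
  set dl : EuclideanSpace ℝ (Fin n) := gloVec n (Gl i) (Gu i) y - gloVec n (Gl i) (Gu i) x with hdl
  set dh : EuclideanSpace ℝ (Fin n) := ghiVec n (Gl i) (Gu i) y - ghiVec n (Gl i) (Gu i) x with hdh
  have h1 : ∀ j : Fin n, (dl + dh) j =
      (glo n (Gl i) (Gu i) y j + ghi n (Gl i) (Gu i) y j)
      - (glo n (Gl i) (Gu i) x j + ghi n (Gl i) (Gu i) x j) := by
    intro j
    simp only [hdl, hdh, PiLp.add_apply, PiLp.sub_apply, gloVec, ghiVec, PiLp.toLp_apply]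
    ring
  have h2 : ∀ j : Fin n, (dh - dl) j =
      (ghi n (Gl i) (Gu i) y j - glo n (Gl i) (Gu i) y j)
      - (ghi n (Gl i) (Gu i) x j - glo n (Gl i) (Gu i) x j) := by
    intro j
    simp only [hdl, hdh, PiLp.add_apply, PiLp.sub_apply, gloVec, ghiVec, PiLp.toLp_apply]
    ring
  have hphi : ∀ z : EuclideanSpace ℝ (Fin n), phi m n Gl Gu z v i = (1/2 : ℝ) *
      ((∑ j, (glo n (Gl i) (Gu i) z j + ghi n (Gl i) (Gu i) z j) * v j) +
       ∑ j, (ghi n (Gl i) (Gu i) z j - glo n (Gl i) (Gu i) z j) * |v j|) := fun _ => rfl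
  have e1 : ∑ j, (dl + dh) j * v j =
      (∑ j, (glo n (Gl i) (Gu i) y j + ghi n (Gl i) (Gu i) y j) * v j)
      - ∑ j, (glo n (Gl i) (Gu i) x j + ghi n (Gl i) (Gu i) x j) * v j := by
    rw [← Finset.sum_sub_distrib]
    refine Finset.sum_congr rfl (fun j _ => ?_)
    rw [h1 j]; ring
  have e2 : ∑ j, (dh - dl) j * |v j| =
      (∑ j, (ghi n (Gl i) (Gu i) y j - glo n (Gl i) (Gu i) y j) * |v j|)
      - ∑ j, (ghi n (Gl i) (Gu i) x j - glo n (Gl i) (Gu i) x j) * |v j| := by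
    rw [← Finset.sum_sub_distrib]
    refine Finset.sum_congr rfl (fun j _ => ?_)
    rw [h2 j]; ring
  have b1 : ∑ j, (dl + dh) j * v j ≤ (‖dl‖ + ‖dh‖) * ‖v‖ := by
    calc ∑ j, (dl + dh) j * v j ≤ ‖dl + dh‖ * ‖v‖ := sum_mul_le_norm _ _
      _ ≤ (‖dl‖ + ‖dh‖) * ‖v‖ :=
          mul_le_mul_of_nonneg_right (norm_add_le _ _) (norm_nonneg _)
  have b2 : ∑ j, (dh - dl) j * |v j| ≤ (‖dl‖ + ‖dh‖) * ‖v‖ := by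
    calc ∑ j, (dh - dl) j * |v j| ≤ ‖dh - dl‖ * ‖v‖ := sum_mul_abs_le_norm _ _
      _ ≤ (‖dl‖ + ‖dh‖) * ‖v‖ := by
          refine mul_le_mul_of_nonneg_right ?_ (norm_nonneg _)
          calc ‖dh - dl‖ ≤ ‖dh‖ + ‖dl‖ := norm_sub_le _ _
            _ = ‖dl‖ + ‖dh‖ := by ring
  rw [hphi y, hphi x]
  rw [e1] at b1
  rw [e2] at b2
  linarith

lemma psi_shift (hm : 0 < m) {C : ℝ} (x y v : EuclideanSpace ℝ (Fin n))
    (hC : ∀ i : Fin m, ‖gloVec n (Gl i) (Gu i) y - gloVec n (Gl i) (Gu i) x‖ +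
      ‖ghiVec n (Gl i) (Gu i) y - ghiVec n (Gl i) (Gu i) x‖ ≤ C) :
    psi m n Gl Gu y v ≤ psi m n Gl Gu x v + C * ‖v‖ := by
  refine psi_le hm (fun i => ?_)
  calc phi m n Gl Gu y v i ≤ phi m n Gl Gu x v i +
      (‖gloVec n (Gl i) (Gu i) y - gloVec n (Gl i) (Gu i) x‖ +
       ‖ghiVec n (Gl i) (Gu i) y - ghiVec n (Gl i) (Gu i) x‖) * ‖v‖ := phi_shift i x y v
    _ ≤ psi m n Gl Gu x v + C * ‖v‖ :=
        add_le_add (le_psi hm i) (mul_le_mul_of_nonneg_right (hC i) (norm_nonneg _))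

end MDY

set_option maxHeartbeats 2000000 in
theorem mdy_convergence (m n : ℕ) (hm : 0 < m) (hn : 0 < n)
    (Gl Gu : Fin m → EuclideanSpace ℝ (Fin n) → ℝ)
    (hGl : ∀ i, ContDiff ℝ 1 (Gl i)) (hGu : ∀ i, ContDiff ℝ 1 (Gu i))
    (hle : ∀ (i : Fin m) (x : EuclideanSpace ℝ (Fin n)), Gl i x ≤ Gu i x)
    (vv : EuclideanSpace ℝ (Fin n) → EuclideanSpace ℝ (Fin n))
    (hvmin : ∀ y w : EuclideanSpace ℝ (Fin n),
      psi m n Gl Gu y (vv y) + (1/2) * ‖vv y‖^2 ≤ psi m n Gl Gu y w + (1/2) * ‖w‖^2)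
    (ρ σ : ℝ) (hρ : 0 < ρ) (hρσ : ρ < σ) (hσ : σ < 1)
    (x d : ℕ → EuclideanSpace ℝ (Fin n)) (t : ℕ → ℝ) (β : ℕ → ℝ)
    (hx : ∀ k : ℕ, x (k+1) = x k + t k • d k)
    (ht : ∀ k : ℕ, 0 < t k)
    (hd0 : d 0 = vv (x 0))
    (hdk : ∀ k : ℕ, d (k+1) = vv (x (k+1)) + β (k+1) • d k)
    (hvne : ∀ k : ℕ, vv (x k) ≠ 0)
    (ζ : ℝ) (hζ : 1 < ζ)
    (hA1 : AssumptionA1 m n Gl Gu (x 0))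
    (hA2 : AssumptionA2 m n Gl Gu (x 0))
    (hβ : ∀ k : ℕ, β (k+1) =
      -psi m n Gl Gu (x (k+1)) (vv (x (k+1))) /
        (psi m n Gl Gu (x (k+1)) (d k) - ζ * psi m n Gl Gu (x k) (d k)))
    (hw : ∀ k : ℕ, StrongWolfe m n Gl Gu ρ σ (x k) (d k) (t k)) :
    Filter.liminf (fun k : ℕ => ‖vv (x k)‖) Filter.atTop = 0 := by
  have hmne : Nonempty (Fin m) := ⟨⟨0, hm⟩⟩
  have hσ0 : 0 < σ := hρ.trans hρσ
  -- basic facts about v(x)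
  have hv : ∀ y, psi m n Gl Gu y (vv y) ≤ -(1/2) * ‖vv y‖^2 := by
    intro y
    have h := hvmin y 0
    rw [MDY.psi_zero hm] at h
    simp only [norm_zero] at h
    nlinarith [h]
  have hvneg : ∀ k, psi m n Gl Gu (x k) (vv (x k)) < 0 := by
    intro k
    have h1 : 0 < ‖vv (x k)‖ := norm_pos_iff.2 (hvne k)
    nlinarith [hv (x k)]
  have hw2 : ∀ k, |psi m n Gl Gu (x (k+1)) (d k)| ≤ σ * |psi m n Gl Gu (x k) (d k)| := by
    intro k
    have := (hw k).2
    rwa [← hx k] at this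
  -- descent: psi (x k) (d k) < 0 and auxiliary facts
  have hneg : ∀ k, psi m n Gl Gu (x k) (d k) < 0 := by
    intro k
    induction k with
    | zero => rw [hd0]; exact hvneg 0
    | succ k ih =>
      have hlow : σ * psi m n Gl Gu (x k) (d k) ≤ psi m n Gl Gu (x (k+1)) (d k) := by
        have h1 := (abs_le.1 (hw2 k)).1
        rw [abs_of_neg ih] at h1
        linarith
      have hD : 0 < psi m n Gl Gu (x (k+1)) (d k) - ζ * psi m n Gl Gu (x k) (d k) := by
        nlinarith
      have hβpos : 0 < β (k+1) := by
        rw [hβ k]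
        exact div_pos (by linarith [hvneg (k+1)]) hD
      have hval : psi m n Gl Gu (x (k+1)) (vv (x (k+1))) =
          -(β (k+1) * (psi m n Gl Gu (x (k+1)) (d k) - ζ * psi m n Gl Gu (x k) (d k))) := by
        rw [hβ k]
        field_simp
      have hsub : psi m n Gl Gu (x (k+1)) (d (k+1)) ≤
          psi m n Gl Gu (x (k+1)) (vv (x (k+1))) + β (k+1) * psi m n Gl Gu (x (k+1)) (d k) := by
        rw [hdk k]
        exact MDY.psi_add_smul hm hβpos.le
      have hfin : β (k+1) * (ζ * psi m n Gl Gu (x k) (d k)) < 0 :=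
        mul_neg_of_pos_of_neg hβpos (by nlinarith)
      nlinarith [hsub, hval, hfin]
  -- nonzero directions
  have hdpos : ∀ k, 0 < ‖d k‖ := by
    intro k
    rcases eq_or_ne (d k) 0 with h | h
    · exfalso
      have := hneg k
      rw [h, MDY.psi_zero hm] at this
      exact lt_irrefl 0 this
    · exact norm_pos_iff.2 h
  have hpne : ∀ k, psi m n Gl Gu (x k) (d k) ≠ 0 := fun k => (hneg k).ne
  -- per-step facts (using hneg)
  have hlow : ∀ k, σ * psi m n Gl Gu (x k) (d k) ≤ psi m n Gl Gu (x (k+1)) (d k) := by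
    intro k
    have h1 := (abs_le.1 (hw2 k)).1
    rw [abs_of_neg (hneg k)] at h1
    linarith
  have hup : ∀ k, psi m n Gl Gu (x (k+1)) (d k) ≤ -σ * psi m n Gl Gu (x k) (d k) := by
    intro k
    have h1 := (abs_le.1 (hw2 k)).2
    rw [abs_of_neg (hneg k)] at h1
    linarith [le_abs_self (psi m n Gl Gu (x (k+1)) (d k))]
  have hD : ∀ k, 0 < psi m n Gl Gu (x (k+1)) (d k) - ζ * psi m n Gl Gu (x k) (d k) := by
    intro k
    nlinarith [hlow k, hneg k]
  have hβpos : ∀ k, 0 < β (k+1) := by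
    intro k
    rw [hβ k]
    exact div_pos (by linarith [hvneg (k+1)]) (hD k)
  have hval : ∀ k, psi m n Gl Gu (x (k+1)) (vv (x (k+1))) =
      -(β (k+1) * (psi m n Gl Gu (x (k+1)) (d k) - ζ * psi m n Gl Gu (x k) (d k))) := by
    intro k
    rw [hβ k]
    field_simp
    exact (mul_div_cancel_right₀ _ (hD k).ne').symm
  -- key inequality : psi_{k+1}(d^{k+1}) ≤ ζ β_{k+1} psi_k(d^k)
  have hkey : ∀ k, psi m n Gl Gu (x (k+1)) (d (k+1)) ≤
      ζ * β (k+1) * psi m n Gl Gu (x k) (d k) := by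
    intro k
    have hsub : psi m n Gl Gu (x (k+1)) (d (k+1)) ≤
        psi m n Gl Gu (x (k+1)) (vv (x (k+1))) + β (k+1) * psi m n Gl Gu (x (k+1)) (d k) := by
      rw [hdk k]
      exact MDY.psi_add_smul hm (hβpos k).le
    nlinarith [hval k, hsub]
  -- lower bound on β
  have hβlow : ∀ k, ‖vv (x (k+1))‖^2 ≤
      β (k+1) * (2 * (σ + ζ) * (-(psi m n Gl Gu (x k) (d k)))) := by
    intro k
    have hDle : psi m n Gl Gu (x (k+1)) (d k) - ζ * psi m n Gl Gu (x k) (d k) ≤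
        (σ + ζ) * (-(psi m n Gl Gu (x k) (d k))) := by
      nlinarith [hup k]
    have hvb : (1/2 : ℝ) * ‖vv (x (k+1))‖^2 ≤
        β (k+1) * ((σ + ζ) * (-(psi m n Gl Gu (x k) (d k)))) := by
      have h1 : (1/2 : ℝ) * ‖vv (x (k+1))‖^2 ≤
          β (k+1) * (psi m n Gl Gu (x (k+1)) (d k) - ζ * psi m n Gl Gu (x k) (d k)) := by
        nlinarith [hv (x (k+1)), hval k]
      have h2 := mul_le_mul_of_nonneg_left hDle (hβpos k).le
      linarith
    nlinarith [hvb]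
  -- monotone decrease of objective values
  have hmon : ∀ (i : Fin m) (k : ℕ), Gl i (x (k+1)) ≤ Gl i (x k) ∧ Gu i (x (k+1)) ≤ Gu i (x k) := by
    intro i k
    have h := (hw k).1 i
    rw [← hx k] at h
    have hneg' : ρ * t k * psi m n Gl Gu (x k) (d k) ≤ 0 := by
      have := mul_pos hρ (ht k)
      nlinarith [hneg k]
    exact ⟨h.1.trans (by linarith), h.2.trans (by linarith)⟩
  have hL0 : ∀ k, x k ∈ LevelSet m n Gl Gu (x 0) := by
    intro k
    induction k with
    | zero => exact fun i => ⟨le_refl _, le_refl _⟩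
    | succ k ih => exact fun i => ⟨(hmon i k).1.trans (ih i).1, (hmon i k).2.trans (ih i).2⟩
  -- Zoutendijk-type bound
  set i0 : Fin m := ⟨0, hm⟩ with hi0
  obtain ⟨⟨Cl, hCl⟩, -⟩ := hA2 x hL0 (fun i k => hmon i k) i0
  have hsum1 : ∀ N : ℕ, ∑ k ∈ Finset.range N,
      ρ * t k * (-(psi m n Gl Gu (x k) (d k))) ≤ Gl i0 (x 0) - Cl := by
    intro N
    have hterm : ∀ k, ρ * t k * (-(psi m n Gl Gu (x k) (d k))) ≤ Gl i0 (x k) - Gl i0 (x (k+1)) := by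
      intro k
      have h := ((hw k).1 i0).1
      rw [← hx k] at h
      linarith
    calc ∑ k ∈ Finset.range N, ρ * t k * (-(psi m n Gl Gu (x k) (d k)))
        ≤ ∑ k ∈ Finset.range N, (Gl i0 (x k) - Gl i0 (x (k+1))) :=
          Finset.sum_le_sum (fun k _ => hterm k)
      _ = Gl i0 (x 0) - Gl i0 (x N) := Finset.sum_range_sub' (fun k => Gl i0 (x k)) N
      _ ≤ Gl i0 (x 0) - Cl := by linarith [hCl N]
  -- Lipschitz constant
  choose L hL using hA1
  set Lmax : ℝ := Finset.univ.sup' (Finset.univ_nonempty) L with hLmax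
  have hLmax_pos : 0 < Lmax := lt_of_lt_of_le (hL i0).1 (Finset.le_sup' L (Finset.mem_univ i0))
  have hLle : ∀ i : Fin m, L i ≤ Lmax := fun i => Finset.le_sup' L (Finset.mem_univ i)
  -- shift bound
  have hshift : ∀ k, psi m n Gl Gu (x (k+1)) (d k) ≤
      psi m n Gl Gu (x k) (d k) + (2 * Lmax * (t k * ‖d k‖)) * ‖d k‖ := by
    intro k
    have hxd : ‖x (k+1) - x k‖ = t k * ‖d k‖ := by
      rw [hx k]
      simp [norm_smul, abs_of_pos (ht k)]
    refine MDY.psi_shift hm (x k) (x (k+1)) (d k) (fun i => ?_)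
    have h1 := (hL i).2 (x (k+1)) (hL0 (k+1)) (x k) (hL0 k)
    have h2 : L i * ‖x (k+1) - x k‖ ≤ Lmax * (t k * ‖d k‖) := by
      rw [hxd]
      exact mul_le_mul_of_nonneg_right (hLle i) (mul_nonneg (ht k).le (norm_nonneg _))
    have h3 := h1.1
    have h4 := h1.2
    rw [hxd] at h2 h3 h4
    linarith [h3, h4, h2]
  -- step length lower bound ⇒ Zoutendijk sum
  have htk : ∀ k, (1 - σ) * (-(psi m n Gl Gu (x k) (d k))) ≤ 2 * Lmax * t k * ‖d k‖^2 := by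
    intro k
    have h1 := hshift k
    have h2 := hlow k
    nlinarith [h1, h2, sq_abs (‖d k‖)]
  set S : ℕ → ℝ := fun k => (psi m n Gl Gu (x k) (d k))^2 / ‖d k‖^2 with hSdef
  have hSpos : ∀ k, 0 < S k := fun k => div_pos (pow_two_pos_of_ne_zero (hpne k)) (pow_pos (hdpos k) 2)
  set c1 : ℝ := ρ * (1 - σ) / (2 * Lmax) with hc1
  have hc1pos : 0 < c1 := by
    apply div_pos
    · exact mul_pos hρ (by linarith)
    · linarith
  have hSle : ∀ k, c1 * S k ≤ ρ * t k * (-(psi m n Gl Gu (x k) (d k))) := by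
    intro k
    have hp2 : (0:ℝ) < ‖d k‖^2 := pow_pos (hdpos k) 2
    have h2 : 0 < -(psi m n Gl Gu (x k) (d k)) := by linarith [hneg k]
    have h3 := mul_le_mul_of_nonneg_left
      (mul_le_mul_of_nonneg_right (htk k) h2.le) hρ.le
    have e1 : S k = (psi m n Gl Gu (x k) (d k))^2 / ‖d k‖^2 := rfl
    rw [e1, hc1, div_mul_div_comm, div_le_iff₀ (mul_pos (by linarith) hp2)]
    linarith [h3]
  set B : ℝ := (Gl i0 (x 0) - Cl) / c1 with hB
  have hSsum : ∀ N : ℕ, ∑ k ∈ Finset.range N, S k ≤ B := by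
    intro N
    have h1 : c1 * ∑ k ∈ Finset.range N, S k ≤ Gl i0 (x 0) - Cl := by
      rw [Finset.mul_sum]
      calc ∑ k ∈ Finset.range N, c1 * S k
          ≤ ∑ k ∈ Finset.range N, ρ * t k * (-(psi m n Gl Gu (x k) (d k))) :=
            Finset.sum_le_sum (fun k _ => hSle k)
        _ ≤ Gl i0 (x 0) - Cl := hsum1 N
    rw [hB, le_div_iff₀ hc1pos]
    linarith
  -- recursion for r k = ‖d k‖² / ψ_k(d^k)²
  set r : ℕ → ℝ := fun k => ‖d k‖^2 / (psi m n Gl Gu (x k) (d k))^2 with hrdef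
  have hrpos : ∀ k, 0 < r k :=
    fun k => div_pos (pow_pos (hdpos k) 2) (pow_two_pos_of_ne_zero (hpne k))
  have hSr : ∀ k, S k = 1 / r k := by
    intro k
    have e1 : S k = (psi m n Gl Gu (x k) (d k))^2 / ‖d k‖^2 := rfl
    have e2 : r k = ‖d k‖^2 / (psi m n Gl Gu (x k) (d k))^2 := rfl
    rw [e1, e2, one_div_div]
  set ee : ℝ := ζ^2 - 1 with hee
  have hepos : 0 < ee := by rw [hee]; exact sub_pos.2 (one_lt_pow₀ hζ two_ne_zero)
  set c2 : ℝ := 4*(σ+ζ)^2*(1+ee⁻¹)/ζ^2 with hc2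
  have hσζ : 0 < σ + ζ := by linarith
  have hc2pos : 0 < c2 := by
    apply div_pos
    · have h1 : (0:ℝ) < 1 + ee⁻¹ := by positivity
      exact mul_pos (mul_pos (by norm_num) (pow_pos hσζ 2)) h1
    · exact pow_pos (by linarith) 2
  have hrec : ∀ k, r (k+1) ≤ r k + c2 / ‖vv (x (k+1))‖^2 := by
    intro k
    have hζ0 : (0:ℝ) < ζ := by linarith
    have hV : 0 < ‖vv (x (k+1))‖^2 := pow_pos (norm_pos_iff.2 (hvne (k+1))) 2
    have hA : 0 < (psi m n Gl Gu (x (k+1)) (d (k+1)))^2 := pow_two_pos_of_ne_zero (hpne (k+1))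
    have hBq : 0 < (psi m n Gl Gu (x k) (d k))^2 := pow_two_pos_of_ne_zero (hpne k)
    have hβ' := hβpos k
    have F1 : ‖d (k+1)‖ ≤ ‖vv (x (k+1))‖ + β (k+1) * ‖d k‖ := by
      rw [hdk k]
      refine (norm_add_le _ _).trans ?_
      rw [norm_smul, Real.norm_eq_abs, abs_of_pos hβ']
    have F2 : ζ^2 * (β (k+1))^2 * (psi m n Gl Gu (x k) (d k))^2 ≤
        (psi m n Gl Gu (x (k+1)) (d (k+1)))^2 := by
      have h1 := hkey k
      have h2 : ζ * β (k+1) * psi m n Gl Gu (x k) (d k) < 0 :=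
        mul_neg_of_pos_of_neg (mul_pos hζ0 hβ') (hneg k)
      nlinarith [h1, h2]
    have F3 := hβlow k
    have step1 : ‖d (k+1)‖^2 ≤ (1+ee⁻¹) * ‖vv (x (k+1))‖^2 +
        ζ^2 * (β (k+1))^2 * ‖d k‖^2 := by
      have hsq : ‖d (k+1)‖^2 ≤ (‖vv (x (k+1))‖ + β (k+1) * ‖d k‖)^2 := by
        nlinarith [F1, norm_nonneg (d (k+1))]
      have h2ab : (2*‖vv (x (k+1))‖*(β (k+1) * ‖d k‖) - ee*(β (k+1) * ‖d k‖)^2) * ee ≤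
          ‖vv (x (k+1))‖^2 := by
        nlinarith [sq_nonneg (‖vv (x (k+1))‖ - ee*(β (k+1) * ‖d k‖))]
      have h2ab' : 2*‖vv (x (k+1))‖*(β (k+1) * ‖d k‖) - ee*(β (k+1) * ‖d k‖)^2 ≤
          ee⁻¹ * ‖vv (x (k+1))‖^2 := by
        rw [inv_mul_eq_div]
        exact (le_div_iff₀ hepos).2 h2ab
      have hze : 1 + ee = ζ^2 := by rw [hee]; ring
      nlinarith [hsq, h2ab', sq_nonneg (β (k+1) * ‖d k‖)]
    have step2 : (‖vv (x (k+1))‖^2)^2 ≤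
        4*(σ+ζ)^2*(β (k+1))^2*(psi m n Gl Gu (x k) (d k))^2 := by
      have h1 := mul_self_le_mul_self (sq_nonneg (‖vv (x (k+1))‖)) F3
      nlinarith [h1]
    have hc2e : c2 * ζ^2 = 4*(σ+ζ)^2*(1+ee⁻¹) := by
      rw [hc2]
      exact div_mul_cancel₀ _ (ne_of_gt (pow_pos (show (0:ℝ) < ζ by linarith) 2))
    have m1 := mul_le_mul_of_nonneg_right step1
      (mul_nonneg hBq.le hV.le)
    have m2 := mul_le_mul_of_nonneg_left F2 (mul_nonneg hc2pos.le hBq.le)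
    have m3 := mul_le_mul_of_nonneg_left F2 (mul_nonneg (sq_nonneg ‖d k‖) hV.le)
    have m4 : (1+ee⁻¹) * ((‖vv (x (k+1))‖^2)^2 * (psi m n Gl Gu (x k) (d k))^2) ≤
        c2 * ζ^2 * ((β (k+1))^2 * (psi m n Gl Gu (x k) (d k))^2 *
          (psi m n Gl Gu (x k) (d k))^2) := by
      rw [hc2e]
      have := mul_le_mul_of_nonneg_left (mul_le_mul_of_nonneg_right step2 hBq.le)
        (show (0:ℝ) ≤ 1 + ee⁻¹ by positivity)
      nlinarith [this]
    have main : ‖d (k+1)‖^2 * ((psi m n Gl Gu (x k) (d k))^2 * ‖vv (x (k+1))‖^2) ≤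
        (‖d k‖^2 * ‖vv (x (k+1))‖^2 + c2 * (psi m n Gl Gu (x k) (d k))^2) *
          (psi m n Gl Gu (x (k+1)) (d (k+1)))^2 := by
      nlinarith [m1, m2, m3, m4]
    have e1 : r (k+1) = ‖d (k+1)‖^2 / (psi m n Gl Gu (x (k+1)) (d (k+1)))^2 := rfl
    have e2 : r k = ‖d k‖^2 / (psi m n Gl Gu (x k) (d k))^2 := rfl
    rw [e1, e2, div_add_div _ _ hBq.ne' hV.ne', div_le_div_iff₀ hA (mul_pos hBq hV)]
    linarith [main]
  -- final contradiction
  by_contra hlim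
  have h0S : (0:ℝ) ∈ {a | ∀ᶠ k in Filter.atTop, a ≤ ‖vv (x k)‖} :=
    Filter.Eventually.of_forall (fun k => norm_nonneg _)
  rw [Filter.liminf_eq] at hlim
  by_cases hbdd : BddAbove {a | ∀ᶠ k in Filter.atTop, a ≤ ‖vv (x k)‖}
  swap
  · exact hlim (Real.sSup_of_not_bddAbove hbdd)
  have hge : 0 ≤ sSup {a | ∀ᶠ k in Filter.atTop, a ≤ ‖vv (x k)‖} := le_csSup hbdd h0S
  have hpos : 0 < sSup {a | ∀ᶠ k in Filter.atTop, a ≤ ‖vv (x k)‖} :=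
    lt_of_le_of_ne hge (Ne.symm hlim)
  obtain ⟨γ, hγS, hγgt⟩ := exists_lt_of_lt_csSup ⟨0, h0S⟩ (half_lt_self hpos)
  have hγpos : 0 < γ := (half_pos hpos).trans hγgt
  obtain ⟨K, hK⟩ := Filter.eventually_atTop.1 hγS
  have hrK : ∀ j : ℕ, r (K + j) ≤ r K + j * (c2/γ^2) := by
    intro j
    induction j with
    | zero => simp
    | succ j ih =>
      have h1 := hrec (K+j)
      have h2 : γ ≤ ‖vv (x (K+j+1))‖ := hK _ (by omega)
      have h3 : c2/‖vv (x (K+j+1))‖^2 ≤ c2/γ^2 :=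
        div_le_div_of_nonneg_left hc2pos.le (pow_pos hγpos 2) (by nlinarith [hγpos, h2])
      have he4 : K + (j+1) = (K+j) + 1 := rfl
      rw [he4]
      push_cast
      linarith [ih, h1, h3]
  set C : ℝ := max (r K + 1) (c2/γ^2) with hC
  have hCpos : 0 < C := lt_of_lt_of_le (by linarith [hrpos K]) (le_max_left _ _)
  have hSlow : ∀ j : ℕ, 1/(C*(j+1)) ≤ S (K + j) := by
    intro j
    have h1 : r (K + j) ≤ C * (j+1) := by
      have hc2γ : c2/γ^2 ≤ C := le_max_right _ _
      have hrk : r K ≤ C := by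
        have := le_max_left (r K + 1) (c2/γ^2)
        linarith
      calc r (K+j) ≤ r K + j*(c2/γ^2) := hrK j
        _ ≤ C + j*C := by
            have := mul_le_mul_of_nonneg_left hc2γ (Nat.cast_nonneg (α := ℝ) j)
            linarith
        _ = C*(j+1) := by ring
    rw [hSr (K+j)]
    exact one_div_le_one_div_of_le (hrpos (K+j)) h1
  obtain ⟨N, hN⟩ := (Real.tendsto_sum_range_one_div_nat_succ_atTop.eventually_gt_atTop (C*B)).exists
  have h1 : ∑ j ∈ Finset.range N, (1:ℝ)/(j+1) ≤ C * ∑ j ∈ Finset.range N, S (K+j) := by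
    rw [Finset.mul_sum]
    refine Finset.sum_le_sum (fun j _ => ?_)
    have hj := hSlow j
    have e : (1:ℝ)/(j+1) = C * (1/(C*(j+1))) := by
      field_simp
    rw [e]
    exact mul_le_mul_of_nonneg_left hj hCpos.le
  have h2 : ∑ j ∈ Finset.range N, S (K+j) ≤ B := by
    have h3 : ∑ j ∈ Finset.range N, S (K+j) ≤ ∑ k ∈ Finset.range (K+N), S k := by
      rw [Finset.sum_range_add]
      have h4 : (0:ℝ) ≤ ∑ k ∈ Finset.range K, S k :=
        Finset.sum_nonneg (fun k _ => (hSpos k).le)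
      linarith
    exact h3.trans (hSsum _)
  have h5 := mul_le_mul_of_nonneg_left h2 hCpos.le
  linarith [hN, h1, h5]
end

section
/- Suppose the level set L₀ of the initial point x⁰ is bounded (Assumption A3). Then there exists M > 0 such that for every x ∈ L₀, the minimizer v(x) satisfies −M ≤ ψ_x(v(x)) ≤ 0; in particular the values ψ_x(v(x)) are uniformly bounded on L₀. -/
open scoped BigOperators

lemma coord_le_norm (n : ℕ) (v : EuclideanSpace ℝ (Fin n)) (j : Fin n) : |v j| ≤ ‖v‖ := by
  rw [EuclideanSpace.norm_eq]
  rw [show |v j| = Real.sqrt (|v j|^2) from (Real.sqrt_sq (abs_nonneg _)).symm]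
  apply Real.sqrt_le_sqrt
  have : |v j|^2 = ‖v j‖^2 := by rw [Real.norm_eq_abs]
  rw [this]
  exact Finset.single_le_sum (f := fun i => ‖v i‖^2) (fun i _ => sq_nonneg _) (Finset.mem_univ j)

lemma pd_continuous (n : ℕ) (F : EuclideanSpace ℝ (Fin n) → ℝ) (hF : ContDiff ℝ 1 F)
    (j : Fin n) : Continuous (fun x => pd n F x j) :=
  (hF.continuous_fderiv one_ne_zero).clm_apply continuous_const

lemma psi_lower (m n : ℕ) (hm : 0 < m) (Gl Gu : Fin m → EuclideanSpace ℝ (Fin n) → ℝ)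
    (x v : EuclideanSpace ℝ (Fin n)) (C : ℝ) (hC : 0 ≤ C)
    (hb : ∀ (i : Fin m) (j : Fin n), |glo n (Gl i) (Gu i) x j| ≤ C ∧
      |ghi n (Gl i) (Gu i) x j| ≤ C) :
    -(C * n * ‖v‖) ≤ psi m n Gl Gu x v := by
  have hne : Nonempty (Fin m) := ⟨⟨0, hm⟩⟩
  set i0 : Fin m := ⟨0, hm⟩
  set f : Fin m → ℝ := fun i => (1 / 2 : ℝ) *
    ((∑ j : Fin n, (glo n (Gl i) (Gu i) x j + ghi n (Gl i) (Gu i) x j) * v j) +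
     (∑ j : Fin n, (ghi n (Gl i) (Gu i) x j - glo n (Gl i) (Gu i) x j) * |v j|)) with hf
  have hle : f i0 ≤ psi m n Gl Gu x v := le_ciSup (Set.Finite.bddAbove (Set.finite_range f)) i0
  refine le_trans ?_ hle
  have hS2 : 0 ≤ ∑ j : Fin n, (ghi n (Gl i0) (Gu i0) x j - glo n (Gl i0) (Gu i0) x j) * |v j| :=
    Finset.sum_nonneg fun j _ => mul_nonneg (sub_nonneg.mpr (min_le_max)) (abs_nonneg _)
  have hS1 : (n : ℝ) • (-(2 * C * ‖v‖)) ≤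
      ∑ j : Fin n, (glo n (Gl i0) (Gu i0) x j + ghi n (Gl i0) (Gu i0) x j) * v j := by
    have := Finset.card_nsmul_le_sum Finset.univ
      (fun j => (glo n (Gl i0) (Gu i0) x j + ghi n (Gl i0) (Gu i0) x j) * v j)
      (-(2 * C * ‖v‖)) ?_
    · simpa [Finset.card_univ, nsmul_eq_mul, smul_eq_mul] using this
    · intro j _
      show -(2 * C * ‖v‖) ≤ (glo n (Gl i0) (Gu i0) x j + ghi n (Gl i0) (Gu i0) x j) * v j
      have h1 : |(glo n (Gl i0) (Gu i0) x j + ghi n (Gl i0) (Gu i0) x j) * v j| ≤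
          2 * C * ‖v‖ := by
        rw [abs_mul]
        have ha : |glo n (Gl i0) (Gu i0) x j + ghi n (Gl i0) (Gu i0) x j| ≤ 2 * C := by
          have := (hb i0 j).1; have := (hb i0 j).2
          calc |glo n (Gl i0) (Gu i0) x j + ghi n (Gl i0) (Gu i0) x j|
              ≤ |glo n (Gl i0) (Gu i0) x j| + |ghi n (Gl i0) (Gu i0) x j| := abs_add_le _ _
            _ ≤ 2 * C := by linarith
        exact mul_le_mul ha (coord_le_norm n v j) (abs_nonneg _) (by positivity)
      linarith [neg_abs_le ((glo n (Gl i0) (Gu i0) x j + ghi n (Gl i0) (Gu i0) x j) * v j)]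
  have hn0 : (0:ℝ) ≤ (n:ℝ) := Nat.cast_nonneg n
  show -(C * (n:ℝ) * ‖v‖) ≤ f i0
  simp only [hf]
  set S1 := ∑ j : Fin n, (glo n (Gl i0) (Gu i0) x j + ghi n (Gl i0) (Gu i0) x j) * v j
  set S2 := ∑ j : Fin n, (ghi n (Gl i0) (Gu i0) x j - glo n (Gl i0) (Gu i0) x j) * |v j|
  rw [smul_eq_mul] at hS1
  nlinarith [norm_nonneg v]

theorem psi_v_bounded_on_level_set (m n : ℕ) (hm : 0 < m) (hn : 0 < n)
    (Gl Gu : Fin m → EuclideanSpace ℝ (Fin n) → ℝ)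
    (hGl : ∀ i, ContDiff ℝ 1 (Gl i)) (hGu : ∀ i, ContDiff ℝ 1 (Gu i))
    (hle : ∀ (i : Fin m) (x : EuclideanSpace ℝ (Fin n)), Gl i x ≤ Gu i x)
    (vv : EuclideanSpace ℝ (Fin n) → EuclideanSpace ℝ (Fin n))
    (hvmin : ∀ y w : EuclideanSpace ℝ (Fin n),
      psi m n Gl Gu y (vv y) + (1/2) * ‖vv y‖^2 ≤ psi m n Gl Gu y w + (1/2) * ‖w‖^2)
    (x0 : EuclideanSpace ℝ (Fin n))
    (hA3 : Bornology.IsBounded (LevelSet m n Gl Gu x0)) :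
    ∃ M : ℝ, 0 < M ∧ ∀ x ∈ LevelSet m n Gl Gu x0,
      -M ≤ psi m n Gl Gu x (vv x) ∧ psi m n Gl Gu x (vv x) ≤ 0 := by
  classical
  set L := LevelSet m n Gl Gu x0 with hLdef
  set g : EuclideanSpace ℝ (Fin n) → ℝ :=
    fun x => ∑ i : Fin m, ∑ j : Fin n, (|pd n (Gl i) x j| + |pd n (Gu i) x j|) with hg
  have hgc : Continuous g := by
    apply continuous_finset_sum; intro i _
    apply continuous_finset_sum; intro j _
    exact ((pd_continuous n (Gl i) (hGl i) j).abs.add (pd_continuous n (Gu i) (hGu i) j).abs)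
  obtain ⟨C, hC⟩ := (hA3.isCompact_closure).exists_bound_of_continuousOn hgc.continuousOn
  have hx0L : x0 ∈ L := fun i => ⟨le_refl _, le_refl _⟩
  have hC0 : 0 ≤ C := le_trans (norm_nonneg _) (hC x0 (subset_closure hx0L))
  have hpdb : ∀ x ∈ L, ∀ (i : Fin m) (j : Fin n),
      |pd n (Gl i) x j| ≤ C ∧ |pd n (Gu i) x j| ≤ C := by
    intro x hx i j
    have hx' : ‖g x‖ ≤ C := hC x (subset_closure hx)
    have h2 : ∑ j' : Fin n, (|pd n (Gl i) x j'| + |pd n (Gu i) x j'|) ≤ g x :=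
      Finset.single_le_sum
        (f := fun i' => ∑ j' : Fin n, (|pd n (Gl i') x j'| + |pd n (Gu i') x j'|))
        (fun _ _ => Finset.sum_nonneg fun _ _ => by positivity) (Finset.mem_univ i)
    have h3 : |pd n (Gl i) x j| + |pd n (Gu i) x j| ≤
        ∑ j' : Fin n, (|pd n (Gl i) x j'| + |pd n (Gu i) x j'|) :=
      Finset.single_le_sum (f := fun j' => |pd n (Gl i) x j'| + |pd n (Gu i) x j'|)
        (fun _ _ => by positivity) (Finset.mem_univ j)
    have h4 : g x ≤ C := le_trans (le_abs_self _) (by rwa [Real.norm_eq_abs] at hx')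
    constructor
    · linarith [abs_nonneg (pd n (Gu i) x j)]
    · linarith [abs_nonneg (pd n (Gl i) x j)]
  have hb : ∀ x ∈ L, ∀ (i : Fin m) (j : Fin n),
      |glo n (Gl i) (Gu i) x j| ≤ C ∧ |ghi n (Gl i) (Gu i) x j| ≤ C := by
    intro x hx i j
    obtain ⟨h1, h2⟩ := hpdb x hx i j
    rw [abs_le] at h1 h2
    constructor
    · exact abs_le.mpr ⟨le_min h1.1 h2.1, (min_le_left _ _).trans h1.2⟩
    · exact abs_le.mpr ⟨h1.1.trans (le_max_left _ _), max_le h1.2 h2.2⟩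
  refine ⟨2 * C^2 * (n:ℝ)^2 + 1, by positivity, ?_⟩
  intro x hx
  have hlow := psi_lower m n hm Gl Gu x (vv x) C hC0 (hb x hx)
  have h0 := hvmin x 0
  rw [psi_zero m n hm Gl Gu x, norm_zero] at h0
  set p := psi m n Gl Gu x (vv x) with hp
  set N := ‖vv x‖ with hN
  have hN0 : 0 ≤ N := norm_nonneg _
  have h0' : p + 1/2 * N^2 ≤ 0 := by simpa using h0
  constructor
  · nlinarith [sq_nonneg (N - 2 * C * (n:ℝ)), (Nat.cast_nonneg n : (0:ℝ) ≤ n)]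
  · nlinarith [sq_nonneg N]
end
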